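/- All the rate constants a_j, b_j, c_j (1 ≤ j ≤ L) of the fixed connected component can be identified from the derivatives s_L^{(ℓ)} with 1 ≤ ℓ ≤ max{2, 2L−1}; that is, the map sending the vector of all rate constants of the network to (a_1,…,a_L, b_1,…,b_L, c_1,…,c_L) is identifiable from the single variable s_L with D = max{2, 2L−1}. -/

import Mathlib

set_option linter.unusedSectionVars false


open MvPolynomial Finsupp

variable {σ : Type*}

/-- The total (Lie) derivative of a polynomial `φ` associated to the polynomial vector
field `f`: `φ̇ = Σ_x (∂φ/∂x)·f x`. -/
noncomputable def lieD [Fintype σ] (f : σ → MvPolynomial σ ℝ)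
    (φ : MvPolynomial σ ℝ) : MvPolynomial σ ℝ :=
  ∑ x : σ, MvPolynomial.pderiv x φ * f x

/-- Iterated total (Lie) derivative. -/
noncomputable def lieDIter [Fintype σ] (f : σ → MvPolynomial σ ℝ) :
    ℕ → MvPolynomial σ ℝ → MvPolynomial σ ℝ
  | 0, φ => φ
  | n + 1, φ => lieD f (lieDIter f n φ)

/-- Indicator of a species inside a complex, as a real number. -/
def ind [DecidableEq σ] (a x : σ) : ℝ := if a = x then 1 else 0

/-- A chemical reaction network of the structural form of Assumption 1: the connected
components are indexed by `ι`; component `i` is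
`Y i + S i 0 ⇄ U i 1 → Y i + S i 1 ⇄ U i 2 → ⋯ ⇄ U i (L i) → Y i + S i (L i)`,
with rate constants `a_{i,j}, b_{i,j}, c_{i,j}` for the reactions
`Y i + S i (j-1) → U i j`, `U i j → Y i + S i (j-1)`, `U i j → Y i + S i j`
(`1 ≤ j ≤ L i`). Only the values `S i j` for `j ≤ L i` and `U i j` for
`1 ≤ j ≤ L i` are relevant. -/
structure A1Network (σ : Type*) where
  ι : Type
  [fintypeι : Fintype ι]
  L : ι → ℕ
  Lpos : ∀ i, 1 ≤ L i
  Y : ι → σ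
  S : ι → ℕ → σ
  U : ι → ℕ → σ

attribute [instance] A1Network.fintypeι

namespace A1Network

variable [Fintype σ] [DecidableEq σ]

/-- Rate-constant index: component `i`, block `j+1` (for `j : Fin (L i)`), and
`0, 1, 2` for the constants `a, b, c` of the block. -/
def Param (N : A1Network σ) : Type := (i : N.ι) × Fin (N.L i) × Fin 3

instance (N : A1Network σ) : Fintype N.Param :=
  inferInstanceAs (Fintype ((i : N.ι) × Fin (N.L i) × Fin 3))

/-- `x` is an intermediate species of the network. -/
def inter (N : A1Network σ) (x : σ) : Prop :=
  ∃ i, ∃ j : Fin (N.L i), x = N.U i ((j : ℕ) + 1)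

/-- The non-intermediate `x₁` reacts with the non-intermediate `x₂`
(a reaction `x₁ + x₂ → U` exists). -/
def reactsWith (N : A1Network σ) (x₁ x₂ : σ) : Prop :=
  ∃ i, ∃ j : Fin (N.L i),
    (x₁ = N.Y i ∧ x₂ = N.S i (j : ℕ)) ∨ (x₂ = N.Y i ∧ x₁ = N.S i (j : ℕ))

/-- The intermediate `u` reacts to the non-intermediate `x`
(a reaction `u → x + X₂` exists). -/
def reactsTo (N : A1Network σ) (u x : σ) : Prop :=
  ∃ i, ∃ j : Fin (N.L i), u = N.U i ((j : ℕ) + 1) ∧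
    (x = N.Y i ∨ x = N.S i (j : ℕ) ∨ x = N.S i ((j : ℕ) + 1))

/-- The distinctness/uniqueness requirements of Assumption 1: the intermediates of the
entire network are pairwise distinct and distinct from all non-intermediates; the
non-intermediates of one component are pairwise distinct; each complex lies in a
unique connected component. -/
structure Assumption1 (N : A1Network σ) : Prop where
  U_inj : ∀ i (j : Fin (N.L i)) i' (j' : Fin (N.L i')),
    N.U i ((j : ℕ) + 1) = N.U i' ((j' : ℕ) + 1) → i = i' ∧ (j : ℕ) = (j' : ℕ)
  U_ne_Y : ∀ i (j : Fin (N.L i)) i', N.U i ((j : ℕ) + 1) ≠ N.Y i'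
  U_ne_S : ∀ i (j : Fin (N.L i)) i' j', j' ≤ N.L i' → N.U i ((j : ℕ) + 1) ≠ N.S i' j'
  S_inj : ∀ i j j', j ≤ N.L i → j' ≤ N.L i → N.S i j = N.S i j' → j = j'
  complex_unique : ∀ i i' j j', j ≤ N.L i → j' ≤ N.L i' →
    (∀ x : σ, ind (N.Y i) x + ind (N.S i j) x = ind (N.Y i') x + ind (N.S i' j') x) →
    i = i'

/-- `part` is a partition of the species as in Assumption 2: intermediates form class `0`;
all the substrates and products of a component lie in one class `α ≥ 1` which contains
neither the enzyme of the component nor any intermediate. -/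
def IsPartition (N : A1Network σ) (part : σ → ℕ) : Prop :=
  (∀ x, N.inter x → part x = 0) ∧
  (∀ i : N.ι, ∃ α, 1 ≤ α ∧ (∀ j, j ≤ N.L i → part (N.S i j) = α) ∧
    part (N.Y i) ≠ α ∧ part (N.Y i) ≠ 0)

/-- Assumption 2: there exists a partition as above. -/
def Assumption2 (N : A1Network σ) : Prop := ∃ part, N.IsPartition part

/-- The mass-action right-hand side of the induced dynamical system:
`ẋ = Σ_{y→y'} k_{yy'} x^y (y'-y)`. -/
noncomputable def rhs (N : A1Network σ) (k : N.Param → ℝ) (x : σ) : MvPolynomial σ ℝ :=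
  ∑ i : N.ι, ∑ j : Fin (N.L i),
    (C (k ⟨i, j, 0⟩ *
          (ind (N.U i ((j : ℕ) + 1)) x - ind (N.Y i) x - ind (N.S i (j : ℕ)) x)) *
        (X (N.Y i) * X (N.S i (j : ℕ)))
      + C (k ⟨i, j, 1⟩ *
          (ind (N.Y i) x + ind (N.S i (j : ℕ)) x - ind (N.U i ((j : ℕ) + 1)) x)) *
        X (N.U i ((j : ℕ) + 1))
      + C (k ⟨i, j, 2⟩ *
          (ind (N.Y i) x + ind (N.S i ((j : ℕ) + 1)) x - ind (N.U i ((j : ℕ) + 1)) x)) *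
        X (N.U i ((j : ℕ) + 1)))

/-- `x^{(ℓ)}(x, k)`: the `ℓ`-th iterated total derivative of the variable `x`. -/
noncomputable def deriv (N : A1Network σ) (k : N.Param → ℝ) (ℓ : ℕ) (x : σ) :
    MvPolynomial σ ℝ :=
  lieDIter (N.rhs k) ℓ (X x)

/-- The map `ψ` on rate constants is identifiable from the set of variables `T` with `D`
derivatives: whenever two positive rate vectors give the same derivatives
`x^{(ℓ)}`, `1 ≤ ℓ ≤ D`, `x ∈ T`, as polynomials, the values of `ψ` agree. -/
def IdentifiableFrom {α : Type*} (N : A1Network σ) (ψ : (N.Param → ℝ) → α)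
    (T : Set σ) (D : ℕ) : Prop :=
  ∀ k₁ k₂ : N.Param → ℝ, (∀ r, 0 < k₁ r) → (∀ r, 0 < k₂ r) →
    (∀ x ∈ T, ∀ ℓ, 1 ≤ ℓ → ℓ ≤ D → N.deriv k₁ ℓ x = N.deriv k₂ ℓ x) →
    ψ k₁ = ψ k₂


/-! ### Auxiliary machinery for the identifiability proof -/

section Aux

omit [Fintype σ] in
lemma coeff_pderiv (x : σ) (φ : MvPolynomial σ ℝ) (d : σ →₀ ℕ) :
    coeff d (pderiv x φ) = ((d x : ℝ) + 1) * coeff (d + single x 1) φ := by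
  induction φ using MvPolynomial.induction_on' with
  | monomial u a =>
    rw [pderiv_monomial, coeff_monomial, coeff_monomial]
    rcases eq_or_ne (u x) 0 with h0 | h0
    · have h1 : ¬ (u = d + single x 1) := by
        intro h; apply absurd h0; rw [h]; simp
      rw [if_neg h1, mul_zero]
      split_ifs with h2
      · simp [h0]
      · rfl
    · have key : (u - single x 1 = d) ↔ (u = d + single x 1) := by
        constructor
        · intro h; rw [← h]; ext z
          rcases eq_or_ne z x with rfl | hz
          · simp; omega
          · simp [Finsupp.single_apply, Ne.symm hz]
        · intro h; rw [h]; ext z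
          rcases eq_or_ne z x with rfl | hz
          · simp
          · simp [Finsupp.single_apply, Ne.symm hz]
      by_cases h : u = d + single x 1
      · rw [if_pos (key.mpr h), if_pos h]
        have : u x = d x + 1 := by rw [h]; simp
        rw [this]; push_cast; ring
      · rw [if_neg (fun hh => h (key.mp hh)), if_neg h, mul_zero]
  | add p q hp hq => simp [hp, hq]; ring

/-- multiplicity-weighted predecessor coefficient -/
noncomputable def pc (φ : MvPolynomial σ ℝ) (e r : σ →₀ ℕ) (z : σ) : ℝ :=
  (((e - r + single z 1 : σ →₀ ℕ) z : ℕ) : ℝ) * coeff (e - r + single z 1) φ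

omit [Fintype σ] in
lemma coeff_pderiv_mul_monomial (x : σ) (φ : MvPolynomial σ ℝ) (e r : σ →₀ ℕ) (c : ℝ) :
    coeff e (pderiv x φ * monomial r c) =
      if r ≤ e then c * (((e - r + single x 1 : σ →₀ ℕ) x : ℕ) : ℝ) *
        coeff (e - r + single x 1) φ
      else 0 := by
  rw [coeff_mul_monomial']
  split_ifs with h
  · rw [coeff_pderiv]
    have : (((e - r + single x 1 : σ →₀ ℕ) x : ℕ) : ℝ) = ((e-r) x : ℝ) + 1 := by
      simp
    rw [this]; ring
  · rfl

lemma sum_ind_mul (z : σ) (G : σ → ℝ) : ∑ x : σ, ind z x * G x = G z := by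
  simp [ind]

lemma sum_coeff_pderiv_mulA (φ : MvPolynomial σ ℝ) (e r : σ →₀ ℕ) (c : ℝ)
    (z₁ z₂ z₃ : σ) :
    ∑ x : σ, coeff e (pderiv x φ * monomial r
        (c * (ind z₁ x - ind z₂ x - ind z₃ x))) =
      if r ≤ e then c * (pc φ e r z₁ - pc φ e r z₂ - pc φ e r z₃) else 0 := by
  have h1 : ∀ x : σ, coeff e (pderiv x φ * monomial r
        (c * (ind z₁ x - ind z₂ x - ind z₃ x))) =
      if r ≤ e then (c * (ind z₁ x - ind z₂ x - ind z₃ x)) * pc φ e r x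
      else 0 := by
    intro x
    rw [coeff_pderiv_mul_monomial, pc]
    split_ifs with h
    · ring
    · rfl
  simp only [h1]
  split_ifs with h
  · rw [← sum_ind_mul z₁ (fun x => pc φ e r x), ← sum_ind_mul z₂ (fun x => pc φ e r x),
      ← sum_ind_mul z₃ (fun x => pc φ e r x), ← Finset.sum_sub_distrib,
      ← Finset.sum_sub_distrib, Finset.mul_sum]
    exact Finset.sum_congr rfl fun x _ => by ring
  · simp

lemma sum_coeff_pderiv_mulB (φ : MvPolynomial σ ℝ) (e r : σ →₀ ℕ) (c : ℝ)
    (z₁ z₂ z₃ : σ) :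
    ∑ x : σ, coeff e (pderiv x φ * monomial r
        (c * (ind z₁ x + ind z₂ x - ind z₃ x))) =
      if r ≤ e then c * (pc φ e r z₁ + pc φ e r z₂ - pc φ e r z₃) else 0 := by
  have h1 : ∀ x : σ, coeff e (pderiv x φ * monomial r
        (c * (ind z₁ x + ind z₂ x - ind z₃ x))) =
      if r ≤ e then (c * (ind z₁ x + ind z₂ x - ind z₃ x)) * pc φ e r x
      else 0 := by
    intro x
    rw [coeff_pderiv_mul_monomial, pc]
    split_ifs with h
    · ring
    · rfl
  simp only [h1]
  split_ifs with h
  · rw [← sum_ind_mul z₁ (fun x => pc φ e r x), ← sum_ind_mul z₂ (fun x => pc φ e r x),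
      ← sum_ind_mul z₃ (fun x => pc φ e r x), ← Finset.sum_add_distrib,
      ← Finset.sum_sub_distrib, Finset.mul_sum]
    exact Finset.sum_congr rfl fun x _ => by ring
  · simp

variable (N : A1Network σ)

/-- The reactant exponent of the binding reaction of block `j` of component `i`. -/
noncomputable def rA (i : N.ι) (j : Fin (N.L i)) : σ →₀ ℕ :=
  single (N.Y i) 1 + single (N.S i (j : ℕ)) 1

/-- The reactant exponent of the unbinding reactions of block `j`. -/
noncomputable def rB (i : N.ι) (j : Fin (N.L i)) : σ →₀ ℕ :=
  single (N.U i ((j : ℕ) + 1)) 1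

lemma coeff_lieD_rhs (k : N.Param → ℝ) (φ : MvPolynomial σ ℝ)
    (e : σ →₀ ℕ) :
    coeff e (lieD (N.rhs k) φ) =
      ∑ i : N.ι, ∑ j : Fin (N.L i),
        ((if N.rA i j ≤ e then
            k ⟨i, j, 0⟩ * (pc φ e (N.rA i j) (N.U i ((j : ℕ) + 1))
              - pc φ e (N.rA i j) (N.Y i) - pc φ e (N.rA i j) (N.S i (j : ℕ))) else 0)
        + (if N.rB i j ≤ e then
            k ⟨i, j, 1⟩ * (pc φ e (N.rB i j) (N.Y i) + pc φ e (N.rB i j) (N.S i (j : ℕ))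
              - pc φ e (N.rB i j) (N.U i ((j : ℕ) + 1)))
          + k ⟨i, j, 2⟩ * (pc φ e (N.rB i j) (N.Y i) + pc φ e (N.rB i j) (N.S i ((j : ℕ) + 1))
              - pc φ e (N.rB i j) (N.U i ((j : ℕ) + 1))) else 0)) := by
  have hXX : ∀ (c : ℝ) (aa bb : σ), C c * (X aa * X bb)
      = monomial (single aa 1 + single bb 1) (c : ℝ) := by
    intro c aa bb; rw [X, X, monomial_mul, C_mul_monomial]; congr 1; ring
  have hXU : ∀ (c : ℝ) (u : σ), C c * X u = (monomial (single u 1) c : MvPolynomial σ ℝ) := by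
    intro c u; rw [X, C_mul_monomial, mul_one]
  unfold lieD rhs
  simp only [hXX, hXU, Finset.mul_sum, mul_add, coeff_sum, coeff_add]
  rw [Finset.sum_comm]
  apply Finset.sum_congr rfl; intro i _
  rw [Finset.sum_comm]
  apply Finset.sum_congr rfl; intro j _
  rw [Finset.sum_add_distrib, Finset.sum_add_distrib,
    sum_coeff_pderiv_mulA, sum_coeff_pderiv_mulB, sum_coeff_pderiv_mulB]
  simp only [rA, rB]
  split_ifs with h1 h2 <;> simp only [*, if_true, if_false, not_false_eq_true] <;> ring

end Aux


section Component

variable (N : A1Network σ) (i₀ : N.ι)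

/-- The species of the fixed component `i₀`. -/
def kept (x : σ) : Prop :=
  x = N.Y i₀ ∨ (∃ r, r ≤ N.L i₀ ∧ x = N.S i₀ r) ∨
    (∃ r, 1 ≤ r ∧ r ≤ N.L i₀ ∧ x = N.U i₀ r)

variable (h1 : N.Assumption1) (part : σ → ℕ) (hp : N.IsPartition part)

section Distinct
include h1

lemma dYU : ∀ r, 1 ≤ r → r ≤ N.L i₀ → N.Y i₀ ≠ N.U i₀ r := by
  intro r hr1 hrL h
  have h2 := h1.U_ne_Y i₀ ⟨r - 1, by omega⟩ i₀
  simp only at h2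
  apply h2
  have : r - 1 + 1 = r := by omega
  rw [this]
  exact h.symm

lemma dSU : ∀ r r', r ≤ N.L i₀ → 1 ≤ r' → r' ≤ N.L i₀ → N.S i₀ r ≠ N.U i₀ r' := by
  intro r r' hr hr1 hrL h
  have h2 := h1.U_ne_S i₀ ⟨r' - 1, by omega⟩ i₀ r hr
  simp only at h2
  apply h2
  have : r' - 1 + 1 = r' := by omega
  rw [this]
  exact h.symm

lemma dUU : ∀ r r', 1 ≤ r → r ≤ N.L i₀ → 1 ≤ r' → r' ≤ N.L i₀ →
    N.U i₀ r = N.U i₀ r' → r = r' := by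
  intro r r' hr1 hrL hr1' hrL' h
  have h2 := h1.U_inj i₀ ⟨r - 1, by omega⟩ i₀ ⟨r' - 1, by omega⟩
  simp only at h2
  have : r - 1 + 1 = r := by omega
  have h' : r' - 1 + 1 = r' := by omega
  rw [this, h'] at h2
  have := (h2 h).2
  omega

lemma dSS : ∀ r r', r ≤ N.L i₀ → r' ≤ N.L i₀ → N.S i₀ r = N.S i₀ r' → r = r' :=
  fun r r' hr hr' h => h1.S_inj i₀ r r' hr hr' h

include hp

lemma dYS : ∀ r, r ≤ N.L i₀ → N.Y i₀ ≠ N.S i₀ r := by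
  intro r hr h
  obtain ⟨α, hα1, hSα, hYα, hY0⟩ := hp.2 i₀
  exact hYα (by rw [h]; exact hSα r hr)

/-- A kept intermediate of the network belongs to component `i₀`. -/
lemma keptU_eq : ∀ i (j : Fin (N.L i)), kept N i₀ (N.U i ((j : ℕ) + 1)) → i = i₀ := by
  intro i j hk
  rcases hk with h | ⟨r, hr, h⟩ | ⟨r, hr1, hrL, h⟩
  · exact absurd h (h1.U_ne_Y i j i₀)
  · exact absurd h (h1.U_ne_S i j i₀ r hr)
  · have h2 := h1.U_inj i j i₀ ⟨r - 1, by omega⟩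
    simp only at h2
    have : r - 1 + 1 = r := by omega
    rw [this] at h2
    exact (h2 h).1

/-- The two reactants of a binding reaction of another component cannot both be
species of component `i₀`. -/
lemma not_both_kept : ∀ i, i ≠ i₀ → ∀ j : Fin (N.L i),
    kept N i₀ (N.Y i) → kept N i₀ (N.S i (j : ℕ)) → False := by
  intro i hne j hY hS
  obtain ⟨α, hα1, hSα, hYα, hY0⟩ := hp.2 i₀
  obtain ⟨αi, hαi1, hSαi, hYαi, hYi0⟩ := hp.2 i
  have hjL : (j : ℕ) ≤ N.L i := le_of_lt j.2
  rcases hY with hYa | ⟨r, hr, hYb⟩ | ⟨r, hr1, hrL, hYc⟩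
  · rcases hS with hSa | ⟨r', hr', hSb⟩ | ⟨r', hr1', hrL', hSc⟩
    · -- Y i = Y i₀, S i j = Y i₀
      apply hYαi
      rw [show N.Y i = N.S i (j:ℕ) from by rw [hYa, hSa]]
      exact hSαi _ hjL
    · -- Y i = Y i₀, S i j = S i₀ r'
      apply hne
      apply h1.complex_unique i i₀ (j : ℕ) r' hjL hr'
      intro x
      rw [hYa, hSb]
    · exact h1.U_ne_S i₀ ⟨r' - 1, by omega⟩ i (j:ℕ) hjL
        (by rw [show r' - 1 + 1 = r' from by omega]; exact hSc.symm)
  · rcases hS with hSa | ⟨r', hr', hSb⟩ | ⟨r', hr1', hrL', hSc⟩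
    · -- Y i = S i₀ r, S i j = Y i₀
      apply hne
      apply h1.complex_unique i i₀ (j : ℕ) r hjL hr
      intro x
      rw [hYb, hSa]
      ring
    · -- Y i = S i₀ r, S i j = S i₀ r'
      apply hYαi
      have e1 : part (N.Y i) = α := by rw [hYb]; exact hSα r hr
      have e2 : αi = α := by
        rw [← hSαi (j:ℕ) hjL, hSb]; exact hSα r' hr'
      rw [e1, e2]
    · exact h1.U_ne_S i₀ ⟨r' - 1, by omega⟩ i (j:ℕ) hjL
        (by rw [show r' - 1 + 1 = r' from by omega]; exact hSc.symm)
  · exact h1.U_ne_Y i₀ ⟨r - 1, by omega⟩ i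
      (by rw [show r - 1 + 1 = r from by omega]; exact hYc.symm)

end Distinct

/-- A weight function on species built from design values. -/
def wtOf (η A : ℤ) (ρ τ : ℕ → ℤ) (x : σ) : ℤ :=
  A + (if x = N.Y i₀ then η - A else 0)
    + (∑ r ∈ Finset.range (N.L i₀ + 1), if x = N.S i₀ r then ρ r - A else 0)
    + (∑ r ∈ Finset.range (N.L i₀), if x = N.U i₀ (r + 1) then τ (r + 1) - A else 0)

variable (η A : ℤ) (ρ τ : ℕ → ℤ)

lemma wtOf_alien (x : σ) (hx : ¬ kept N i₀ x) : wtOf N i₀ η A ρ τ x = A := by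
  unfold wtOf
  rw [if_neg, Finset.sum_eq_zero, Finset.sum_eq_zero]
  · ring
  · intro r hr
    rw [if_neg]
    intro h
    exact hx (Or.inr (Or.inr ⟨r + 1, by omega, by
      simp only [Finset.mem_range] at hr; omega, h⟩))
  · intro r hr
    rw [if_neg]
    intro h
    exact hx (Or.inr (Or.inl ⟨r, by simp only [Finset.mem_range] at hr; omega, h⟩))
  · intro h
    exact hx (Or.inl h)

include h1 hp

lemma wtOf_Y : wtOf N i₀ η A ρ τ (N.Y i₀) = η := by
  unfold wtOf
  rw [if_pos rfl, Finset.sum_eq_zero, Finset.sum_eq_zero]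
  · ring
  · intro r hr
    simp only [Finset.mem_range] at hr
    rw [if_neg (dYU N i₀ h1 (r+1) (by omega) (by omega))]
  · intro r hr
    simp only [Finset.mem_range] at hr
    rw [if_neg (dYS N i₀ h1 part hp r (by omega))]

lemma wtOf_S (n : ℕ) (hn : n ≤ N.L i₀) : wtOf N i₀ η A ρ τ (N.S i₀ n) = ρ n := by
  unfold wtOf
  rw [if_neg (fun h => dYS N i₀ h1 part hp n hn h.symm)]
  rw [Finset.sum_eq_single n, if_pos rfl, Finset.sum_eq_zero]
  · ring
  · intro r hr
    simp only [Finset.mem_range] at hr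
    rw [if_neg (dSU N i₀ h1 n (r+1) hn (by omega) (by omega))]
  · intro r hr hne
    simp only [Finset.mem_range] at hr
    rw [if_neg (fun h => hne ((dSS N i₀ h1 n r hn (by omega) h).symm))]
  · intro hmem
    exact absurd (by simp; omega : n ∈ Finset.range (N.L i₀ + 1)) hmem

lemma wtOf_U (n : ℕ) (hn1 : 1 ≤ n) (hn : n ≤ N.L i₀) :
    wtOf N i₀ η A ρ τ (N.U i₀ n) = τ n := by
  unfold wtOf
  rw [if_neg (fun h => dYU N i₀ h1 n hn1 hn h.symm)]
  rw [Finset.sum_eq_zero, Finset.sum_eq_single (n - 1)]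
  · rw [if_pos (by rw [show n - 1 + 1 = n from by omega]), show n - 1 + 1 = n from by omega]
    ring
  · intro r hr hne
    simp only [Finset.mem_range] at hr
    rw [if_neg (fun h => hne (by
      have := dUU N i₀ h1 n (r+1) hn1 hn (by omega) (by omega) h
      omega))]
  · intro hmem
    exact absurd (by simp; omega : n - 1 ∈ Finset.range (N.L i₀)) hmem
  · intro r hr
    simp only [Finset.mem_range] at hr
    rw [if_neg (fun h => dSU N i₀ h1 r n (by omega) hn1 hn h.symm)]

lemma wtOf_min (hηA : A ≤ η) (hρA : ∀ r ≤ N.L i₀, A ≤ ρ r)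
    (hτA : ∀ r, 1 ≤ r → r ≤ N.L i₀ → A ≤ τ r) : ∀ x, A ≤ wtOf N i₀ η A ρ τ x := by
  intro x
  by_cases hx : kept N i₀ x
  · rcases hx with h | ⟨r, hr, h⟩ | ⟨r, hr1, hrL, h⟩
    · rw [h, wtOf_Y N i₀ h1 part hp]; exact hηA
    · rw [h, wtOf_S N i₀ h1 part hp _ _ _ _ r hr]; exact hρA r hr
    · rw [h, wtOf_U N i₀ h1 part hp _ _ _ _ r hr1 hrL]; exact hτA r hr1 hrL
  · rw [wtOf_alien N i₀ _ _ _ _ x hx]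

end Component


section Weights

variable (N : A1Network σ) (i₀ : N.ι)

/-- Weighted degree of an exponent vector. -/
def Wt (w : σ → ℤ) (e : σ →₀ ℕ) : ℤ := e.sum fun x n => (n : ℤ) * w x

lemma Wt_add (w : σ → ℤ) (e d : σ →₀ ℕ) : Wt w (e + d) = Wt w e + Wt w d :=
  Finsupp.sum_add_index' (by simp) (by intros; push_cast; ring)

lemma Wt_single (w : σ → ℤ) (x : σ) (n : ℕ) : Wt w (single x n) = n * w x :=
  Finsupp.sum_single_index (by simp)

lemma Wt_sub (w : σ → ℤ) {e r : σ →₀ ℕ} (h : r ≤ e) : Wt w (e - r) = Wt w e - Wt w r := by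
  have h2 : e - r + r = e := tsub_add_cancel_of_le h
  conv_rhs => rw [← h2]
  rw [Wt_add]; ring

/-- Requirements on a weight function making every Lie-derivative step increase the
weighted degree by at most `20`. -/
structure WtOK (w : σ → ℤ) (A : ℤ) : Prop where
  hY20 : w (N.Y i₀) ≤ 20
  hS20 : ∀ r ≤ N.L i₀, w (N.S i₀ r) ≤ 20
  hA20 : A ≤ 20
  hAmin : ∀ x, A ≤ w x
  halien : ∀ x, ¬ kept N i₀ x → w x = A
  hc1 : ∀ r, r < N.L i₀ → w (N.U i₀ (r+1)) - w (N.S i₀ (r+1)) ≤ 20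
  hc2 : ∀ r, r < N.L i₀ → w (N.Y i₀) + w (N.S i₀ r) - w (N.U i₀ (r+1)) ≤ 20
  hc3 : ∀ r, r < N.L i₀ → w (N.U i₀ (r+1)) - w (N.S i₀ r) ≤ 20
  hc4 : ∀ r, r < N.L i₀ → w (N.U i₀ (r+1)) - w (N.Y i₀) ≤ 20

variable (h1 : N.Assumption1) (part : σ → ℕ) (hp : N.IsPartition part)
variable {w : σ → ℤ} {A : ℤ}

include h1

lemma w_nonint_le20 (hw : WtOK N i₀ w A) (x : σ)
    (hx : ∀ i (j : Fin (N.L i)), x ≠ N.U i ((j : ℕ) + 1)) : w x ≤ 20 := by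
  by_cases hk : kept N i₀ x
  · rcases hk with h | ⟨r, hr, h⟩ | ⟨r, hr1, hrL, h⟩
    · rw [h]; exact hw.hY20
    · rw [h]; exact hw.hS20 r hr
    · exfalso
      apply hx i₀ ⟨r-1, by omega⟩
      rw [h]
      congr 1
      simp
      omega
  · rw [hw.halien x hk]; exact hw.hA20

include hp

lemma boundA (hw : WtOK N i₀ w A) (i : N.ι) (j : Fin (N.L i)) (z : σ)
    (hz : z = N.U i ((j : ℕ)+1) ∨ z = N.Y i ∨ z = N.S i (j : ℕ)) :
    Wt w (N.rA i j) - w z ≤ 20 := by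
  have hWt : Wt w (N.rA i j) = w (N.Y i) + w (N.S i (j : ℕ)) := by
    rw [rA, Wt_add, Wt_single, Wt_single]; push_cast; ring
  rw [hWt]
  by_cases hi : i = i₀
  · subst hi
    have hjL : (j : ℕ) < N.L i := j.2
    rcases hz with rfl | rfl | rfl
    · exact hw.hc2 (j : ℕ) hjL
    · have := hw.hS20 (j : ℕ) (le_of_lt hjL); omega
    · have := hw.hY20; omega
  · have hnb := not_both_kept N i₀ h1 part hp i hi j
    have hz20 : A - w z ≤ 0 := by have := hw.hAmin z; omega
    have hY' : w (N.Y i) ≤ 20 := w_nonint_le20 N i₀ h1 hw _ (fun i' j' hh => h1.U_ne_Y i' j' i hh.symm)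
    have hS' : w (N.S i (j : ℕ)) ≤ 20 := w_nonint_le20 N i₀ h1 hw _
      (fun i' j' hh => h1.U_ne_S i' j' i (j:ℕ) (le_of_lt j.2) hh.symm)
    by_cases hkY : kept N i₀ (N.Y i)
    · have hkS : ¬ kept N i₀ (N.S i (j : ℕ)) := fun hk => hnb hkY hk
      have := hw.halien _ hkS
      omega
    · have := hw.halien _ hkY
      omega

lemma boundB (hw : WtOK N i₀ w A) (i : N.ι) (j : Fin (N.L i)) (z : σ)
    (hz : z = N.Y i ∨ z = N.S i (j : ℕ) ∨ z = N.S i ((j : ℕ)+1) ∨ z = N.U i ((j : ℕ)+1)) :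
    Wt w (N.rB i j) - w z ≤ 20 := by
  have hWt : Wt w (N.rB i j) = w (N.U i ((j:ℕ)+1)) := by
    rw [rB, Wt_single]; push_cast; ring
  rw [hWt]
  by_cases hi : i = i₀
  · subst hi
    have hjL : (j : ℕ) < N.L i := j.2
    rcases hz with rfl | rfl | rfl | rfl
    · exact hw.hc4 (j : ℕ) hjL
    · exact hw.hc3 (j : ℕ) hjL
    · exact hw.hc1 (j : ℕ) hjL
    · omega
  · have hkU : ¬ kept N i₀ (N.U i ((j:ℕ)+1)) := fun hk => hi (keptU_eq N i₀ h1 part hp i j hk)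
    have := hw.halien _ hkU
    have := hw.hAmin z
    omega

end Weights


section Vanish

variable (N : A1Network σ) (i₀ : N.ι)
variable (h1 : N.Assumption1) (part : σ → ℕ) (hp : N.IsPartition part)
variable {w : σ → ℤ} {A : ℤ}

include h1 hp

/-- The vanishing lemma: coefficients of monomials above the maximal weighted degree
`Wt(s_L) + 20ℓ` vanish in the `ℓ`-th derivative. -/
lemma vanish (k : N.Param → ℝ) (hw : WtOK N i₀ w A) :
    ∀ (ℓ : ℕ) (e : σ →₀ ℕ), Wt w (single (N.S i₀ (N.L i₀)) 1) + 20 * ℓ < Wt w e →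
      coeff e (N.deriv k ℓ (N.S i₀ (N.L i₀))) = 0 := by
  intro ℓ
  induction ℓ with
  | zero =>
    intro e h
    show coeff e (X (N.S i₀ (N.L i₀))) = 0
    rw [coeff_X']
    rw [if_neg]
    intro hh
    rw [hh] at h
    simp at h
  | succ ℓ ih =>
    intro e h
    show coeff e (lieD (N.rhs k) (N.deriv k ℓ (N.S i₀ (N.L i₀)))) = 0
    rw [coeff_lieD_rhs]
    apply Finset.sum_eq_zero; intro i _
    apply Finset.sum_eq_zero; intro j _
    have key : ∀ (r : σ →₀ ℕ), r ≤ e → ∀ z : σ, Wt w r - w z ≤ 20 →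
        pc (N.deriv k ℓ (N.S i₀ (N.L i₀))) e r z = 0 := by
      intro r hr z hb
      unfold pc
      rw [ih (e - r + single z 1) ?_, mul_zero]
      rw [Wt_add, Wt_sub w hr, Wt_single]
      rw [Wt_single] at h ⊢
      push_cast at h ⊢
      omega
    have keyA : ∀ z : σ, (z = N.U i ((j : ℕ)+1) ∨ z = N.Y i ∨ z = N.S i (j : ℕ)) →
        N.rA i j ≤ e → pc (N.deriv k ℓ (N.S i₀ (N.L i₀))) e (N.rA i j) z = 0 :=
      fun z hz hr => key _ hr z (boundA N i₀ h1 part hp hw i j z hz)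
    have keyB : ∀ z : σ,
        (z = N.Y i ∨ z = N.S i (j : ℕ) ∨ z = N.S i ((j : ℕ)+1) ∨ z = N.U i ((j : ℕ)+1)) →
        N.rB i j ≤ e → pc (N.deriv k ℓ (N.S i₀ (N.L i₀))) e (N.rB i j) z = 0 :=
      fun z hz hr => key _ hr z (boundB N i₀ h1 part hp hw i j z hz)
    have eA : (if N.rA i j ≤ e then
        k ⟨i, j, 0⟩ * (pc (N.deriv k ℓ (N.S i₀ (N.L i₀))) e (N.rA i j) (N.U i ((j : ℕ) + 1))
          - pc (N.deriv k ℓ (N.S i₀ (N.L i₀))) e (N.rA i j) (N.Y i)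
          - pc (N.deriv k ℓ (N.S i₀ (N.L i₀))) e (N.rA i j) (N.S i (j : ℕ))) else 0) = 0 := by
      split_ifs with hA
      · rw [keyA _ (Or.inl rfl) hA, keyA _ (Or.inr (Or.inl rfl)) hA,
          keyA _ (Or.inr (Or.inr rfl)) hA]
        ring
      · rfl
    have eB : (if N.rB i j ≤ e then
        k ⟨i, j, 1⟩ * (pc (N.deriv k ℓ (N.S i₀ (N.L i₀))) e (N.rB i j) (N.Y i)
          + pc (N.deriv k ℓ (N.S i₀ (N.L i₀))) e (N.rB i j) (N.S i (j : ℕ))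
          - pc (N.deriv k ℓ (N.S i₀ (N.L i₀))) e (N.rB i j) (N.U i ((j : ℕ) + 1)))
        + k ⟨i, j, 2⟩ * (pc (N.deriv k ℓ (N.S i₀ (N.L i₀))) e (N.rB i j) (N.Y i)
          + pc (N.deriv k ℓ (N.S i₀ (N.L i₀))) e (N.rB i j) (N.S i ((j : ℕ) + 1))
          - pc (N.deriv k ℓ (N.S i₀ (N.L i₀))) e (N.rB i j) (N.U i ((j : ℕ) + 1))) else 0)
        = 0 := by
      split_ifs with hB
      · rw [keyB _ (Or.inl rfl) hB, keyB _ (Or.inr (Or.inl rfl)) hB,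
          keyB _ (Or.inr (Or.inr (Or.inl rfl))) hB, keyB _ (Or.inr (Or.inr (Or.inr rfl))) hB]
        ring
      · rfl
    rw [eA, eB, add_zero]

end Vanish


section CompStep

variable (N : A1Network σ) (i₀ : N.ι)
variable (h1 : N.Assumption1) (part : σ → ℕ) (hp : N.IsPartition part)

include h1 hp

/-- For a target monomial supported on the species of component `i₀`, only the
reactions of component `i₀` contribute to a Lie-derivative step. -/
lemma coeff_lieD_comp (k : N.Param → ℝ) (φ : MvPolynomial σ ℝ) (e : σ →₀ ℕ)
    (hsupp : ∀ x, e x ≠ 0 → kept N i₀ x) :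
    coeff e (lieD (N.rhs k) φ) =
      ∑ j : Fin (N.L i₀),
        ((if N.rA i₀ j ≤ e then
            k ⟨i₀, j, 0⟩ * (pc φ e (N.rA i₀ j) (N.U i₀ ((j : ℕ) + 1))
              - pc φ e (N.rA i₀ j) (N.Y i₀) - pc φ e (N.rA i₀ j) (N.S i₀ (j : ℕ))) else 0)
        + (if N.rB i₀ j ≤ e then
            k ⟨i₀, j, 1⟩ * (pc φ e (N.rB i₀ j) (N.Y i₀) + pc φ e (N.rB i₀ j) (N.S i₀ (j : ℕ))
              - pc φ e (N.rB i₀ j) (N.U i₀ ((j : ℕ) + 1)))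
          + k ⟨i₀, j, 2⟩ * (pc φ e (N.rB i₀ j) (N.Y i₀)
              + pc φ e (N.rB i₀ j) (N.S i₀ ((j : ℕ) + 1))
              - pc φ e (N.rB i₀ j) (N.U i₀ ((j : ℕ) + 1))) else 0)) := by
  rw [coeff_lieD_rhs]
  apply Finset.sum_eq_single_of_mem i₀ (Finset.mem_univ _)
  intro i _ hne
  apply Finset.sum_eq_zero
  intro j _
  have hA : ¬ (N.rA i j ≤ e) := by
    intro hle
    have hY : (1 : ℕ) ≤ e (N.Y i) := by
      have := hle (N.Y i)
      rw [rA, Finsupp.add_apply, Finsupp.single_apply, if_pos rfl] at this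
      omega
    have hS : (1 : ℕ) ≤ e (N.S i (j : ℕ)) := by
      have h3 := hle (N.S i (j : ℕ))
      rw [rA, Finsupp.add_apply, Finsupp.single_eq_same] at h3
      omega
    exact not_both_kept N i₀ h1 part hp i hne j
      (hsupp _ (by omega)) (hsupp _ (by omega))
  have hB : ¬ (N.rB i j ≤ e) := by
    intro hle
    have hU : (1 : ℕ) ≤ e (N.U i ((j : ℕ) + 1)) := by
      have := hle (N.U i ((j : ℕ) + 1))
      rw [rB, Finsupp.single_apply, if_pos rfl] at this
      omega
    exact hne (keptU_eq N i₀ h1 part hp i j (hsupp _ (by omega)))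
  rw [if_neg hA, if_neg hB, add_zero]

end CompStep


section Designs

variable (N : A1Network σ) (i₀ : N.ι)
variable (h1 : N.Assumption1) (part : σ → ℕ) (hp : N.IsPartition part)

include h1 hp

lemma mkWtOK (η A : ℤ) (ρ τ : ℕ → ℤ)
    (hη20 : η ≤ 20) (hA20 : A ≤ 20) (hAη : A ≤ η)
    (hρ : ∀ r ≤ N.L i₀, ρ r ≤ 20 ∧ A ≤ ρ r)
    (hτ : ∀ r, 1 ≤ r → r ≤ N.L i₀ → A ≤ τ r)
    (hq1 : ∀ r < N.L i₀, τ (r+1) - ρ (r+1) ≤ 20)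
    (hq2 : ∀ r < N.L i₀, η + ρ r - τ (r+1) ≤ 20)
    (hq3 : ∀ r < N.L i₀, τ (r+1) - ρ r ≤ 20)
    (hq4 : ∀ r < N.L i₀, τ (r+1) - η ≤ 20) :
    WtOK N i₀ (wtOf N i₀ η A ρ τ) A := by
  have eY := wtOf_Y N i₀ h1 part hp η A ρ τ
  have eS := wtOf_S N i₀ h1 part hp η A ρ τ
  have eU := wtOf_U N i₀ h1 part hp η A ρ τ
  constructor
  · rw [eY]; exact hη20
  · intro r hr; rw [eS r hr]; exact (hρ r hr).1
  · exact hA20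
  · exact wtOf_min N i₀ h1 part hp η A ρ τ hAη (fun r hr => (hρ r hr).2) hτ
  · exact fun x hx => wtOf_alien N i₀ η A ρ τ x hx
  · intro r hr; rw [eU (r+1) (by omega) (by omega), eS (r+1) (by omega)]; exact hq1 r hr
  · intro r hr; rw [eY, eU (r+1) (by omega) (by omega), eS r (by omega)]; exact hq2 r hr
  · intro r hr; rw [eU (r+1) (by omega) (by omega), eS r (by omega)]; exact hq3 r hr
  · intro r hr; rw [eY, eU (r+1) (by omega) (by omega)]; exact hq4 r hr

end Designs

section DesignDefs

variable (N : A1Network σ) (i₀ : N.ι)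

/-- Common alien weight. -/
def wcA : ℤ := -(22 * (N.L i₀ : ℤ)) - 100

def ρch : ℕ → ℤ := fun r => 19 - 22 * (r : ℤ)
def τch : ℕ → ℤ := fun r => 39 - 22 * (r : ℤ)
def ρa : ℕ → ℤ := fun r => if r = 0 then 20 else 10 - 22 * ((r : ℤ) - 1)
def τa : ℕ → ℤ := fun r => if r = 1 then 25 else 30 - 22 * ((r : ℤ) - 1)
def ρK : ℕ → ℤ := fun r => if r = 0 then 19 else 19 - 22 * ((r : ℤ) - 1)
def τK : ℕ → ℤ := fun r => if r = 1 then 38 else 39 - 22 * ((r : ℤ) - 1)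

/-- The chain design weight. -/
def wch : σ → ℤ := wtOf N i₀ 18 (wcA N i₀) (ρch) (τch)
/-- The type-a design weight (identification of `a₁`). -/
def wa : σ → ℤ := wtOf N i₀ 18 (wcA N i₀) (ρa) (τa)
/-- The type-K design weight (identification of `b₁+c₁`). -/
def wK : σ → ℤ := wtOf N i₀ 18 (wcA N i₀) (ρK) (τK)

variable (h1 : N.Assumption1) (part : σ → ℕ) (hp : N.IsPartition part)

include h1 hp

lemma wchOK : WtOK N i₀ (wch N i₀) (wcA N i₀) := by
  apply mkWtOK N i₀ h1 part hp <;>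
    first
      | (intro r hr; simp only [ρch, τch, wcA]; constructor <;> omega)
      | (intro r hr1 hr2; simp only [ρch, τch, wcA]; omega)
      | (intro r hr; simp only [ρch, τch, wcA]; omega)
      | (simp only [wcA]; omega)
      | omega

lemma waOK : WtOK N i₀ (wa N i₀) (wcA N i₀) := by
  apply mkWtOK N i₀ h1 part hp <;>
    first
      | (intro r hr; simp only [ρa, τa, wcA]; constructor <;> split_ifs <;> omega)
      | (intro r hr1 hr2; simp only [ρa, τa, wcA]; split_ifs <;> omega)
      | (intro r hr; simp only [ρa, τa, wcA]; split_ifs <;> omega)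
      | (simp only [wcA]; omega)
      | omega

lemma wKOK : WtOK N i₀ (wK N i₀) (wcA N i₀) := by
  apply mkWtOK N i₀ h1 part hp <;>
    first
      | (intro r hr; simp only [ρK, τK, wcA]; constructor <;> split_ifs <;> omega)
      | (intro r hr1 hr2; simp only [ρK, τK, wcA]; split_ifs <;> omega)
      | (intro r hr; simp only [ρK, τK, wcA]; split_ifs <;> omega)
      | (simp only [wcA]; omega)
      | omega

end DesignDefs


section MonHelpers

variable {N : A1Network σ}

omit [Fintype σ] in
lemma le_rA_Y {i : N.ι} {j : Fin (N.L i)} {e : σ →₀ ℕ} (h : N.rA i j ≤ e) :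
    1 ≤ e (N.Y i) := by
  have h3 := h (N.Y i)
  rw [rA, Finsupp.add_apply, Finsupp.single_eq_same] at h3
  omega

omit [Fintype σ] in
lemma le_rA_S {i : N.ι} {j : Fin (N.L i)} {e : σ →₀ ℕ} (h : N.rA i j ≤ e) :
    1 ≤ e (N.S i (j : ℕ)) := by
  have h3 := h (N.S i (j : ℕ))
  rw [rA, Finsupp.add_apply, Finsupp.single_eq_same] at h3
  omega

omit [Fintype σ] in
lemma le_rB_U {i : N.ι} {j : Fin (N.L i)} {e : σ →₀ ℕ} (h : N.rB i j ≤ e) :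
    1 ≤ e (N.U i ((j : ℕ) + 1)) := by
  have h3 := h (N.U i ((j : ℕ) + 1))
  rw [rB, Finsupp.single_eq_same] at h3
  omega

lemma Wt_pair (w : σ → ℤ) (x z : σ) (m : ℕ) :
    Wt w (single x m + single z 1) = m * w x + w z := by
  rw [Wt_add, Wt_single, Wt_single]; push_cast; ring

lemma Wt_triple (w : σ → ℤ) (x z z' : σ) (m : ℕ) :
    Wt w (single x m + single z 1 + single z' 1) = m * w x + w z + w z' := by
  rw [Wt_add, Wt_pair, Wt_single]; push_cast; ring

omit [Fintype σ] in
lemma pair_apply_ne (x z t : σ) (m : ℕ) (hx : t ≠ x) (hz : t ≠ z) :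
    (single x m + single z 1 : σ →₀ ℕ) t = 0 := by
  rw [Finsupp.add_apply, Finsupp.single_apply, Finsupp.single_apply,
    if_neg (fun h => hx h.symm), if_neg (fun h => hz h.symm)]
  rfl

omit [Fintype σ] in
lemma triple_apply_ne (x z z' t : σ) (m : ℕ) (hx : t ≠ x) (hz : t ≠ z) (hz' : t ≠ z') :
    (single x m + single z 1 + single z' 1 : σ →₀ ℕ) t = 0 := by
  rw [Finsupp.add_apply, pair_apply_ne x z t m hx hz, Finsupp.single_apply,
    if_neg (fun h => hz' h.symm)]
  rfl

omit [Fintype σ] in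
lemma pair_apply_fst (x z : σ) (m : ℕ) (hxz : x ≠ z) :
    (single x m + single z 1 : σ →₀ ℕ) x = m := by
  rw [Finsupp.add_apply, Finsupp.single_eq_same, Finsupp.single_apply,
    if_neg (fun h => hxz h.symm), add_zero]

omit [Fintype σ] in
lemma pair_apply_snd (x z : σ) (m : ℕ) (hxz : x ≠ z) :
    (single x m + single z 1 : σ →₀ ℕ) z = 1 := by
  rw [Finsupp.add_apply, Finsupp.single_eq_same, Finsupp.single_apply,
    if_neg hxz, zero_add]

variable (N) (i₀ : N.ι)

omit [Fintype σ] in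
lemma supp_pair (x z : σ) (m : ℕ) (hx : kept N i₀ x) (hz : kept N i₀ z) :
    ∀ t, (single x m + single z 1 : σ →₀ ℕ) t ≠ 0 → kept N i₀ t := by
  intro t ht
  by_cases h1 : t = x
  · rwa [h1]
  by_cases h2 : t = z
  · rwa [h2]
  exact absurd (pair_apply_ne x z t m h1 h2) ht

omit [Fintype σ] in
lemma supp_triple (x z z' : σ) (m : ℕ) (hx : kept N i₀ x) (hz : kept N i₀ z)
    (hz' : kept N i₀ z') :
    ∀ t, (single x m + single z 1 + single z' 1 : σ →₀ ℕ) t ≠ 0 → kept N i₀ t := by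
  intro t ht
  by_cases h1 : t = x
  · rwa [h1]
  by_cases h2 : t = z
  · rwa [h2]
  by_cases h3 : t = z'
  · rwa [h3]
  exact absurd (triple_apply_ne x z z' t m h1 h2 h3) ht

end MonHelpers


section Chain

variable (N : A1Network σ) (i₀ : N.ι)

/-- The rate constant of type `t` of block `n` (`0`-based) of component `i₀`. -/
noncomputable def par (k : N.Param → ℝ) (t : Fin 3) (n : ℕ) : ℝ :=
  if h : n < N.L i₀ then k ⟨i₀, ⟨n, h⟩, t⟩ else 1

/-- `∏_{r<m} c_{L-r} a_{L-r}` (in `1`-based notation). -/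
noncomputable def Pch (k : N.Param → ℝ) : ℕ → ℝ
  | 0 => 1
  | m+1 => Pch k m * (par N i₀ k 2 (N.L i₀ - 1 - m) * par N i₀ k 0 (N.L i₀ - 1 - m))

/-- The even chain monomial `y^m s_{L-m}`. -/
noncomputable def mAe (m : ℕ) : σ →₀ ℕ :=
  single (N.Y i₀) m + single (N.S i₀ (N.L i₀ - m)) 1

/-- The odd chain monomial `y^m u_{L-m}`. -/
noncomputable def mAo (m : ℕ) : σ →₀ ℕ :=
  single (N.Y i₀) m + single (N.U i₀ (N.L i₀ - m)) 1

variable (h1 : N.Assumption1) (part : σ → ℕ) (hp : N.IsPartition part)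

include h1 hp

lemma keptY : kept N i₀ (N.Y i₀) := Or.inl rfl
lemma keptS (n : ℕ) (hn : n ≤ N.L i₀) : kept N i₀ (N.S i₀ n) := Or.inr (Or.inl ⟨n, hn, rfl⟩)
lemma keptU' (n : ℕ) (h1n : 1 ≤ n) (hn : n ≤ N.L i₀) : kept N i₀ (N.U i₀ n) :=
  Or.inr (Or.inr ⟨n, h1n, hn, rfl⟩)

/-- The odd chain step: `coeff(y^m u_{L-m}, φ_{2m+1}) = c_{L-m} coeff(y^m s_{L-m}, φ_{2m})`. -/
lemma chain_step_odd (k : N.Param → ℝ) (m : ℕ) (hm : m + 1 ≤ N.L i₀) :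
    coeff (mAo N i₀ m) (N.deriv k (2*m+1) (N.S i₀ (N.L i₀))) =
      par N i₀ k 2 (N.L i₀ - 1 - m) *
        coeff (mAe N i₀ m) (N.deriv k (2*m) (N.S i₀ (N.L i₀))) := by
  have hL := N.Lpos i₀
  set L := N.L i₀ with hLdef
  -- distinctness facts
  have dys : ∀ r ≤ L, N.Y i₀ ≠ N.S i₀ r := dYS N i₀ h1 part hp
  have dyu : ∀ r, 1 ≤ r → r ≤ L → N.Y i₀ ≠ N.U i₀ r := dYU N i₀ h1
  have dsu : ∀ r r', r ≤ L → 1 ≤ r' → r' ≤ L → N.S i₀ r ≠ N.U i₀ r' := dSU N i₀ h1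
  have φdef : N.deriv k (2*m+1) (N.S i₀ L) = lieD (N.rhs k) (N.deriv k (2*m) (N.S i₀ L)) :=
    rfl
  set φ := N.deriv k (2*m) (N.S i₀ L) with hφ
  have hsupp : ∀ t, (mAo N i₀ m) t ≠ 0 → kept N i₀ t := by
    rw [mAo]
    exact supp_pair N i₀ _ _ _ (keptY N i₀ h1 part hp)
      (keptU' N i₀ h1 part hp (L - m) (by omega) (by omega))
  rw [φdef, coeff_lieD_comp N i₀ h1 part hp k φ _ hsupp]
  rw [Finset.sum_eq_single_of_mem (⟨L - 1 - m, by omega⟩ : Fin L) (Finset.mem_univ _)]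
  · -- the surviving block
    set j : Fin L := ⟨L - 1 - m, by omega⟩ with hj
    have hj1 : (j : ℕ) + 1 = L - m := by simp [hj]; omega
    have hAfalse : ¬ (N.rA i₀ j ≤ mAo N i₀ m) := by
      intro hle
      have h2 := le_rA_S hle
      rw [mAo, pair_apply_ne _ _ _ _ (fun h => dys (j:ℕ) (by omega) h.symm)
        (fun h => dsu (j:ℕ) (L-m) (by omega) (by omega) (by omega) h)] at h2
      omega
    have hBtrue : N.rB i₀ j ≤ mAo N i₀ m := by
      rw [rB, hj1, mAo]
      intro t
      rw [Finsupp.single_apply]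
      split_ifs with h
      · rw [← h, pair_apply_snd _ _ _ (dyu (L-m) (by omega) (by omega))]
      · omega
    rw [if_neg hAfalse, if_pos hBtrue]
    -- now compute the four pc values
    have herB : mAo N i₀ m - N.rB i₀ j = single (N.Y i₀) m := by
      rw [mAo, rB, hj1, add_tsub_cancel_right]
    -- pc at Y : vanishes
    have hpcY : pc φ (mAo N i₀ m) (N.rB i₀ j) (N.Y i₀) = 0 := by
      unfold pc
      rw [herB, ← Finsupp.single_add]
      rw [vanish N i₀ h1 part hp k (wchOK N i₀ h1 part hp) (2*m) _ ?_, mul_zero]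
      rw [Wt_single, Wt_single, wch, wtOf_Y N i₀ h1 part hp,
        wtOf_S N i₀ h1 part hp _ _ _ _ L (le_refl _)]
      simp only [ρch]
      push_cast
      omega
    -- pc at S j : vanishes
    have hpcS : pc φ (mAo N i₀ m) (N.rB i₀ j) (N.S i₀ (j : ℕ)) = 0 := by
      unfold pc
      rw [herB]
      rw [vanish N i₀ h1 part hp k (wchOK N i₀ h1 part hp) (2*m) _ ?_, mul_zero]
      rw [Wt_single, Wt_pair, wch, wtOf_Y N i₀ h1 part hp,
        wtOf_S N i₀ h1 part hp _ _ _ _ L (le_refl _),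
        wtOf_S N i₀ h1 part hp _ _ _ _ (j : ℕ) (by omega)]
      simp only [ρch]
      push_cast
      omega
    -- pc at U (j+1) : vanishes (the "stay" term)
    have hpcU : pc φ (mAo N i₀ m) (N.rB i₀ j) (N.U i₀ ((j : ℕ) + 1)) = 0 := by
      unfold pc
      rw [herB, hj1]
      rw [vanish N i₀ h1 part hp k (wchOK N i₀ h1 part hp) (2*m) _ ?_, mul_zero]
      rw [Wt_single, Wt_pair, wch, wtOf_Y N i₀ h1 part hp,
        wtOf_S N i₀ h1 part hp _ _ _ _ L (le_refl _),
        wtOf_U N i₀ h1 part hp _ _ _ _ (L - m) (by omega) (by omega)]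
      simp only [ρch, τch]
      push_cast
      omega
    -- pc at S (j+1) : the tracked predecessor
    have hpcT : pc φ (mAo N i₀ m) (N.rB i₀ j) (N.S i₀ ((j : ℕ) + 1)) =
        coeff (mAe N i₀ m) φ := by
      unfold pc
      rw [herB, hj1, ← mAe]
      have hap : (mAe N i₀ m) (N.S i₀ (L - m)) = 1 := by
        rw [mAe]; exact pair_apply_snd _ _ _ (dys (L - m) (by omega))
      rw [hap]
      norm_num
    rw [hpcY, hpcS, hpcU, hpcT]
    have hpar : k ⟨i₀, j, 2⟩ = par N i₀ k 2 (L - 1 - m) := by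
      rw [par, dif_pos (by omega : L - 1 - m < L)]
    rw [← hpar]
    ring
  · -- all other blocks contribute nothing
    intro j _ hne
    have hAfalse : ¬ (N.rA i₀ j ≤ mAo N i₀ m) := by
      intro hle
      have h2 := le_rA_S hle
      rw [mAo, pair_apply_ne _ _ _ _ (fun h => dys (j:ℕ) (by omega) h.symm)
        (fun h => dsu (j:ℕ) (L-m) (by omega) (by omega) (by omega) h)] at h2
      omega
    have hBfalse : ¬ (N.rB i₀ j ≤ mAo N i₀ m) := by
      intro hle
      have h2 := le_rB_U hle
      have hne2 : N.U i₀ ((j:ℕ)+1) ≠ N.U i₀ (L - m) := by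
        intro h
        have := dUU N i₀ h1 ((j:ℕ)+1) (L-m) (by omega) (by omega) (by omega) (by omega) h
        apply hne
        apply Fin.ext
        simp
        omega
      rw [mAo, pair_apply_ne _ _ _ _ (fun h => dyu ((j:ℕ)+1) (by omega) (by omega) h.symm)
        hne2] at h2
      omega
    rw [if_neg hAfalse, if_neg hBfalse, add_zero]

/-- The even chain step (creation):
`coeff(y^{m+1} s_{L-m-1}, φ_{2m+2}) = a_{L-m} coeff(y^m u_{L-m}, φ_{2m+1})`. -/
lemma chain_step_even (k : N.Param → ℝ) (m : ℕ) (hm : m + 1 ≤ N.L i₀) :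
    coeff (mAe N i₀ (m+1)) (N.deriv k (2*m+2) (N.S i₀ (N.L i₀))) =
      par N i₀ k 0 (N.L i₀ - 1 - m) *
        coeff (mAo N i₀ m) (N.deriv k (2*m+1) (N.S i₀ (N.L i₀))) := by
  have hL := N.Lpos i₀
  set L := N.L i₀ with hLdef
  have dys : ∀ r ≤ L, N.Y i₀ ≠ N.S i₀ r := dYS N i₀ h1 part hp
  have dyu : ∀ r, 1 ≤ r → r ≤ L → N.Y i₀ ≠ N.U i₀ r := dYU N i₀ h1
  have dsu : ∀ r r', r ≤ L → 1 ≤ r' → r' ≤ L → N.S i₀ r ≠ N.U i₀ r' := dSU N i₀ h1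
  have dss : ∀ r r', r ≤ L → r' ≤ L → N.S i₀ r = N.S i₀ r' → r = r' := dSS N i₀ h1
  have φdef : N.deriv k (2*m+2) (N.S i₀ L) = lieD (N.rhs k) (N.deriv k (2*m+1) (N.S i₀ L)) :=
    rfl
  set φ := N.deriv k (2*m+1) (N.S i₀ L) with hφ
  have hLm : L - (m + 1) = L - m - 1 := by omega
  have hsupp : ∀ t, (mAe N i₀ (m+1)) t ≠ 0 → kept N i₀ t := by
    rw [mAe]
    exact supp_pair N i₀ _ _ _ (keptY N i₀ h1 part hp)
      (keptS N i₀ h1 part hp (L - (m+1)) (by omega))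
  rw [φdef, coeff_lieD_comp N i₀ h1 part hp k φ _ hsupp]
  rw [Finset.sum_eq_single_of_mem (⟨L - 1 - m, by omega⟩ : Fin L) (Finset.mem_univ _)]
  · set j : Fin L := ⟨L - 1 - m, by omega⟩ with hj
    have hjv : (j : ℕ) = L - (m+1) := by simp [hj]; omega
    have hBfalse : ¬ (N.rB i₀ j ≤ mAe N i₀ (m+1)) := by
      intro hle
      have h2 := le_rB_U hle
      rw [mAe, pair_apply_ne _ _ _ _ (fun h => dyu ((j:ℕ)+1) (by omega) (by omega) h.symm)
        (fun h => dsu (L-(m+1)) ((j:ℕ)+1) (by omega) (by omega) (by omega) h.symm)] at h2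
      omega
    have hAtrue : N.rA i₀ j ≤ mAe N i₀ (m+1) := by
      rw [rA, hjv, mAe]
      intro t
      by_cases h1t : t = N.Y i₀
      · rw [h1t, pair_apply_fst _ _ _ (dys (L-(m+1)) (by omega)),
          pair_apply_fst _ _ _ (dys (L-(m+1)) (by omega))]
        omega
      by_cases h2t : t = N.S i₀ (L - (m+1))
      · rw [h2t, pair_apply_snd _ _ _ (dys (L-(m+1)) (by omega)),
          pair_apply_snd _ _ _ (dys (L-(m+1)) (by omega))]
      · rw [pair_apply_ne _ _ _ _ h1t h2t]
        exact Nat.zero_le _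
    rw [if_neg hBfalse, if_pos hAtrue, add_zero]
    have herA : mAe N i₀ (m+1) - N.rA i₀ j = single (N.Y i₀) m := by
      rw [mAe, rA, hjv, show (single (N.Y i₀) (m+1) : σ →₀ ℕ)
          = single (N.Y i₀) m + single (N.Y i₀) 1 from by rw [← Finsupp.single_add],
        add_assoc, add_tsub_cancel_right]
    have hpcY : pc φ (mAe N i₀ (m+1)) (N.rA i₀ j) (N.Y i₀) = 0 := by
      unfold pc
      rw [herA, ← Finsupp.single_add]
      rw [vanish N i₀ h1 part hp k (wchOK N i₀ h1 part hp) (2*m+1) _ ?_, mul_zero]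
      rw [Wt_single, Wt_single, wch, wtOf_Y N i₀ h1 part hp,
        wtOf_S N i₀ h1 part hp _ _ _ _ L (le_refl _)]
      simp only [ρch]
      push_cast
      omega
    have hpcS : pc φ (mAe N i₀ (m+1)) (N.rA i₀ j) (N.S i₀ (j : ℕ)) = 0 := by
      unfold pc
      rw [herA, hjv]
      rw [vanish N i₀ h1 part hp k (wchOK N i₀ h1 part hp) (2*m+1) _ ?_, mul_zero]
      rw [Wt_single, Wt_pair, wch, wtOf_Y N i₀ h1 part hp,
        wtOf_S N i₀ h1 part hp _ _ _ _ L (le_refl _),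
        wtOf_S N i₀ h1 part hp _ _ _ _ (L-(m+1)) (by omega)]
      simp only [ρch]
      push_cast
      omega
    have hpcT : pc φ (mAe N i₀ (m+1)) (N.rA i₀ j) (N.U i₀ ((j : ℕ) + 1)) =
        coeff (mAo N i₀ m) φ := by
      unfold pc
      have hjU : (j : ℕ) + 1 = L - m := by simp [hj]; omega
      rw [herA, hjU, ← mAo]
      have hap : (mAo N i₀ m) (N.U i₀ (L - m)) = 1 := by
        rw [mAo]; exact pair_apply_snd _ _ _ (dyu (L - m) (by omega) (by omega))
      rw [hap]
      norm_num
    rw [hpcY, hpcS, hpcT]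
    have hpar : k ⟨i₀, j, 0⟩ = par N i₀ k 0 (L - 1 - m) := by
      rw [par, dif_pos (by omega : L - 1 - m < L)]
    rw [← hpar]
    ring
  · intro j _ hne
    have hBfalse : ¬ (N.rB i₀ j ≤ mAe N i₀ (m+1)) := by
      intro hle
      have h2 := le_rB_U hle
      rw [mAe, pair_apply_ne _ _ _ _ (fun h => dyu ((j:ℕ)+1) (by omega) (by omega) h.symm)
        (fun h => dsu (L-(m+1)) ((j:ℕ)+1) (by omega) (by omega) (by omega) h.symm)] at h2
      omega
    have hAfalse : ¬ (N.rA i₀ j ≤ mAe N i₀ (m+1)) := by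
      intro hle
      have h2 := le_rA_S hle
      have hne2 : N.S i₀ (j : ℕ) ≠ N.S i₀ (L - (m+1)) := by
        intro h
        have := dss (j:ℕ) (L-(m+1)) (by omega) (by omega) h
        apply hne
        apply Fin.ext
        simp
        omega
      rw [mAe, pair_apply_ne _ _ _ _ (fun h => dys (j:ℕ) (by omega) h.symm) hne2] at h2
      omega
    rw [if_neg hAfalse, if_neg hBfalse, add_zero]

/-- The stay step used to identify `b_{L-m}`:
`coeff(y^m u_{L-m}, φ_{2m+2}) = -(b+c) coeff(y^m u_{L-m}, φ_{2m+1}) + c coeff(y^m s_{L-m}, φ_{2m+1})`. -/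
lemma chain_step_B (k : N.Param → ℝ) (m : ℕ) (hm : m + 1 ≤ N.L i₀) :
    coeff (mAo N i₀ m) (N.deriv k (2*m+2) (N.S i₀ (N.L i₀))) =
      -(par N i₀ k 1 (N.L i₀ - 1 - m) + par N i₀ k 2 (N.L i₀ - 1 - m)) *
          coeff (mAo N i₀ m) (N.deriv k (2*m+1) (N.S i₀ (N.L i₀)))
        + par N i₀ k 2 (N.L i₀ - 1 - m) *
          coeff (mAe N i₀ m) (N.deriv k (2*m+1) (N.S i₀ (N.L i₀))) := by
  have hL := N.Lpos i₀
  set L := N.L i₀ with hLdef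
  have dys : ∀ r ≤ L, N.Y i₀ ≠ N.S i₀ r := dYS N i₀ h1 part hp
  have dyu : ∀ r, 1 ≤ r → r ≤ L → N.Y i₀ ≠ N.U i₀ r := dYU N i₀ h1
  have dsu : ∀ r r', r ≤ L → 1 ≤ r' → r' ≤ L → N.S i₀ r ≠ N.U i₀ r' := dSU N i₀ h1
  have φdef : N.deriv k (2*m+2) (N.S i₀ L) = lieD (N.rhs k) (N.deriv k (2*m+1) (N.S i₀ L)) :=
    rfl
  set φ := N.deriv k (2*m+1) (N.S i₀ L) with hφ
  have hsupp : ∀ t, (mAo N i₀ m) t ≠ 0 → kept N i₀ t := by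
    rw [mAo]
    exact supp_pair N i₀ _ _ _ (keptY N i₀ h1 part hp)
      (keptU' N i₀ h1 part hp (L - m) (by omega) (by omega))
  rw [φdef, coeff_lieD_comp N i₀ h1 part hp k φ _ hsupp]
  rw [Finset.sum_eq_single_of_mem (⟨L - 1 - m, by omega⟩ : Fin L) (Finset.mem_univ _)]
  · set j : Fin L := ⟨L - 1 - m, by omega⟩ with hj
    have hj1 : (j : ℕ) + 1 = L - m := by simp [hj]; omega
    have hAfalse : ¬ (N.rA i₀ j ≤ mAo N i₀ m) := by
      intro hle
      have h2 := le_rA_S hle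
      rw [mAo, pair_apply_ne _ _ _ _ (fun h => dys (j:ℕ) (by omega) h.symm)
        (fun h => dsu (j:ℕ) (L-m) (by omega) (by omega) (by omega) h)] at h2
      omega
    have hBtrue : N.rB i₀ j ≤ mAo N i₀ m := by
      rw [rB, hj1, mAo]
      intro t
      rw [Finsupp.single_apply]
      split_ifs with h
      · rw [← h, pair_apply_snd _ _ _ (dyu (L-m) (by omega) (by omega))]
      · exact Nat.zero_le _
    rw [if_neg hAfalse, if_pos hBtrue]
    have herB : mAo N i₀ m - N.rB i₀ j = single (N.Y i₀) m := by
      rw [mAo, rB, hj1, add_tsub_cancel_right]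
    have hpcY : pc φ (mAo N i₀ m) (N.rB i₀ j) (N.Y i₀) = 0 := by
      unfold pc
      rw [herB, ← Finsupp.single_add]
      rw [vanish N i₀ h1 part hp k (wchOK N i₀ h1 part hp) (2*m+1) _ ?_, mul_zero]
      rw [Wt_single, Wt_single, wch, wtOf_Y N i₀ h1 part hp,
        wtOf_S N i₀ h1 part hp _ _ _ _ L (le_refl _)]
      simp only [ρch]
      push_cast
      omega
    have hpcS : pc φ (mAo N i₀ m) (N.rB i₀ j) (N.S i₀ (j : ℕ)) = 0 := by
      unfold pc
      rw [herB]
      rw [vanish N i₀ h1 part hp k (wchOK N i₀ h1 part hp) (2*m+1) _ ?_, mul_zero]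
      rw [Wt_single, Wt_pair, wch, wtOf_Y N i₀ h1 part hp,
        wtOf_S N i₀ h1 part hp _ _ _ _ L (le_refl _),
        wtOf_S N i₀ h1 part hp _ _ _ _ (j : ℕ) (by omega)]
      simp only [ρch]
      push_cast
      omega
    have hpcU : pc φ (mAo N i₀ m) (N.rB i₀ j) (N.U i₀ ((j : ℕ) + 1)) =
        coeff (mAo N i₀ m) φ := by
      unfold pc
      rw [herB, hj1, ← mAo]
      have hap : (mAo N i₀ m) (N.U i₀ (L - m)) = 1 := by
        rw [mAo]; exact pair_apply_snd _ _ _ (dyu (L - m) (by omega) (by omega))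
      rw [hap]
      norm_num
    have hpcT : pc φ (mAo N i₀ m) (N.rB i₀ j) (N.S i₀ ((j : ℕ) + 1)) =
        coeff (mAe N i₀ m) φ := by
      unfold pc
      rw [herB, hj1, ← mAe]
      have hap : (mAe N i₀ m) (N.S i₀ (L - m)) = 1 := by
        rw [mAe]; exact pair_apply_snd _ _ _ (dys (L - m) (by omega))
      rw [hap]
      norm_num
    rw [hpcY, hpcS, hpcU, hpcT]
    have hpar1 : k ⟨i₀, j, 1⟩ = par N i₀ k 1 (L - 1 - m) := by
      rw [par, dif_pos (by omega : L - 1 - m < L)]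
    have hpar2 : k ⟨i₀, j, 2⟩ = par N i₀ k 2 (L - 1 - m) := by
      rw [par, dif_pos (by omega : L - 1 - m < L)]
    rw [← hpar1, ← hpar2]
    ring
  · intro j _ hne
    have hAfalse : ¬ (N.rA i₀ j ≤ mAo N i₀ m) := by
      intro hle
      have h2 := le_rA_S hle
      rw [mAo, pair_apply_ne _ _ _ _ (fun h => dys (j:ℕ) (by omega) h.symm)
        (fun h => dsu (j:ℕ) (L-m) (by omega) (by omega) (by omega) h)] at h2
      omega
    have hBfalse : ¬ (N.rB i₀ j ≤ mAo N i₀ m) := by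
      intro hle
      have h2 := le_rB_U hle
      have hne2 : N.U i₀ ((j:ℕ)+1) ≠ N.U i₀ (L - m) := by
        intro h
        have := dUU N i₀ h1 ((j:ℕ)+1) (L-m) (by omega) (by omega) (by omega) (by omega) h
        apply hne
        apply Fin.ext
        simp
        omega
      rw [mAo, pair_apply_ne _ _ _ _ (fun h => dyu ((j:ℕ)+1) (by omega) (by omega) h.symm)
        hne2] at h2
      omega
    rw [if_neg hAfalse, if_neg hBfalse, add_zero]

/-- Base case: `coeff(s_L, φ_0) = 1`. -/
lemma chain_base (k : N.Param → ℝ) :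
    coeff (mAe N i₀ 0) (N.deriv k 0 (N.S i₀ (N.L i₀))) = 1 := by
  show coeff (mAe N i₀ 0) (X (N.S i₀ (N.L i₀))) = 1
  have : mAe N i₀ 0 = single (N.S i₀ (N.L i₀)) 1 := by
    rw [mAe, Finsupp.single_zero, zero_add]
    norm_num
  rw [this, coeff_X', if_pos rfl]

/-- The chain values: `coeff(y^m s_{L-m}, φ_{2m}) = P_m` and
`coeff(y^m u_{L-m}, φ_{2m+1}) = P_m c_{L-m}`. -/
lemma chain_vals (k : N.Param → ℝ) : ∀ m, m ≤ N.L i₀ →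
    coeff (mAe N i₀ m) (N.deriv k (2*m) (N.S i₀ (N.L i₀))) = Pch N i₀ k m ∧
    (m + 1 ≤ N.L i₀ → coeff (mAo N i₀ m) (N.deriv k (2*m+1) (N.S i₀ (N.L i₀))) =
      Pch N i₀ k m * par N i₀ k 2 (N.L i₀ - 1 - m)) := by
  intro m
  induction m with
  | zero =>
    intro _
    constructor
    · exact chain_base N i₀ h1 part hp k
    · intro hm
      rw [chain_step_odd N i₀ h1 part hp k 0 hm, chain_base N i₀ h1 part hp k, Pch]
      ring
  | succ m ih =>
    intro hm
    have hprev := ih (by omega)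
    constructor
    · rw [show 2*(m+1) = 2*m+2 from by ring, chain_step_even N i₀ h1 part hp k m (by omega),
        hprev.2 (by omega), Pch]
      ring
    · intro hm1
      rw [chain_step_odd N i₀ h1 part hp k (m+1) hm1,
        show 2*(m+1) = 2*m+2 from by ring,
        chain_step_even N i₀ h1 part hp k m (by omega), hprev.2 (by omega), Pch]
      ring

end Chain


section TypeAK

variable (N : A1Network σ) (i₀ : N.ι)

/-- The type-a odd tracked monomial `y^m s_{L-m} s_0`. -/
noncomputable def mBo (m : ℕ) : σ →₀ ℕ :=
  single (N.Y i₀) m + single (N.S i₀ (N.L i₀ - m)) 1 + single (N.S i₀ 0) 1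

/-- The type-a even tracked monomial `y^m u_{L-m} s_0`. -/
noncomputable def mBe (m : ℕ) : σ →₀ ℕ :=
  single (N.Y i₀) m + single (N.U i₀ (N.L i₀ - m)) 1 + single (N.S i₀ 0) 1

/-- The type-K odd tracked monomial `y^{m-1} s_{L-m} u_1`. -/
noncomputable def mKo (m : ℕ) : σ →₀ ℕ :=
  single (N.Y i₀) (m-1) + single (N.S i₀ (N.L i₀ - m)) 1 + single (N.U i₀ 1) 1

/-- The type-K even tracked monomial `y^{m-1} u_{L-m} u_1`. -/
noncomputable def mKe (m : ℕ) : σ →₀ ℕ :=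
  single (N.Y i₀) (m-1) + single (N.U i₀ (N.L i₀ - m)) 1 + single (N.U i₀ 1) 1

omit [Fintype σ] [DecidableEq σ] in
lemma sum_pair_eq {M : Type*} [AddCommMonoid M] {n : ℕ} (f : Fin n → M)
    (a b : Fin n) (hab : a ≠ b) (h0 : ∀ c, c ≠ a → c ≠ b → f c = 0) :
    ∑ x, f x = f a + f b := by
  classical
  rw [← Finset.add_sum_erase _ f (Finset.mem_univ a)]
  congr 1
  rw [← Finset.add_sum_erase _ f
    (Finset.mem_erase.mpr ⟨Ne.symm hab, Finset.mem_univ b⟩)]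
  rw [Finset.sum_eq_zero, add_zero]
  intro c hc
  simp only [Finset.mem_erase] at hc
  exact h0 c hc.2.1 hc.1

omit [Fintype σ] in
lemma triple_apply_fst (x z z' : σ) (m : ℕ) (hz : x ≠ z) (hz' : x ≠ z') :
    (single x m + single z 1 + single z' 1 : σ →₀ ℕ) x = m := by
  rw [Finsupp.add_apply, pair_apply_fst _ _ _ hz, Finsupp.single_apply,
    if_neg (fun h => hz' h.symm), add_zero]

omit [Fintype σ] in
lemma triple_apply_snd (x z z' : σ) (m : ℕ) (hz : z ≠ x) (hz' : z ≠ z') :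
    (single x m + single z 1 + single z' 1 : σ →₀ ℕ) z = 1 := by
  rw [Finsupp.add_apply, pair_apply_snd _ _ _ (fun h => hz h.symm), Finsupp.single_apply,
    if_neg (fun h => hz' h.symm), add_zero]

omit [Fintype σ] in
lemma triple_apply_thd (x z z' : σ) (m : ℕ) (hz : z' ≠ x) (hz' : z' ≠ z) :
    (single x m + single z 1 + single z' 1 : σ →₀ ℕ) z' = 1 := by
  rw [Finsupp.add_apply, pair_apply_ne _ _ _ _ hz hz', Finsupp.single_eq_same]

variable (h1 : N.Assumption1) (part : σ → ℕ) (hp : N.IsPartition part)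

include h1 hp

/-- The odd type-a step. -/
lemma stepA_odd (k : N.Param → ℝ) (m : ℕ) (hm1 : 1 ≤ m) (hm : m + 1 ≤ N.L i₀) :
    coeff (mBo N i₀ m) (N.deriv k (2*m+1) (N.S i₀ (N.L i₀))) =
      par N i₀ k 0 (N.L i₀ - m) *
          coeff (mBe N i₀ (m-1)) (N.deriv k (2*m) (N.S i₀ (N.L i₀)))
        - par N i₀ k 0 0 * m * coeff (mAe N i₀ m) (N.deriv k (2*m) (N.S i₀ (N.L i₀))) := by
  have hL := N.Lpos i₀
  set L := N.L i₀ with hLdef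
  have dys : ∀ r ≤ L, N.Y i₀ ≠ N.S i₀ r := dYS N i₀ h1 part hp
  have dyu : ∀ r, 1 ≤ r → r ≤ L → N.Y i₀ ≠ N.U i₀ r := dYU N i₀ h1
  have dsu : ∀ r r', r ≤ L → 1 ≤ r' → r' ≤ L → N.S i₀ r ≠ N.U i₀ r' := dSU N i₀ h1
  have dss : ∀ r r', r ≤ L → r' ≤ L → N.S i₀ r = N.S i₀ r' → r = r' := dSS N i₀ h1
  have φdef : N.deriv k (2*m+1) (N.S i₀ L) = lieD (N.rhs k) (N.deriv k (2*m) (N.S i₀ L)) :=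
    rfl
  set φ := N.deriv k (2*m) (N.S i₀ L) with hφ
  have hsupp : ∀ t, (mBo N i₀ m) t ≠ 0 → kept N i₀ t := by
    rw [mBo]
    exact supp_triple N i₀ _ _ _ _ (keptY N i₀ h1 part hp)
      (keptS N i₀ h1 part hp (L - m) (by omega)) (keptS N i₀ h1 part hp 0 (by omega))
  rw [φdef, coeff_lieD_comp N i₀ h1 part hp k φ _ hsupp]
  have hBfalse : ∀ j : Fin L, ¬ (N.rB i₀ j ≤ mBo N i₀ m) := by
    intro j hle
    have h2 := le_rB_U hle
    rw [mBo, triple_apply_ne _ _ _ _ _ (fun h => dyu ((j:ℕ)+1) (by omega) (by omega) h.symm)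
      (fun h => dsu (L-m) ((j:ℕ)+1) (by omega) (by omega) (by omega) h.symm)
      (fun h => dsu 0 ((j:ℕ)+1) (by omega) (by omega) (by omega) h.symm)] at h2
    omega
  rw [sum_pair_eq _ (⟨L - m, by omega⟩ : Fin L) (⟨0, by omega⟩ : Fin L)
    (by intro h; rw [Fin.mk.injEq] at h; omega) ?hkill]
  case hkill =>
    intro j hja hj0
    have hAfalse : ¬ (N.rA i₀ j ≤ mBo N i₀ m) := by
      intro hle
      have h2 := le_rA_S hle
      have hz : N.S i₀ (j : ℕ) ≠ N.S i₀ (L - m) := by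
        intro h
        have := dss (j:ℕ) (L-m) (by omega) (by omega) h
        exact hja (by apply Fin.ext; simp; omega)
      have hz' : N.S i₀ (j : ℕ) ≠ N.S i₀ 0 := by
        intro h
        have := dss (j:ℕ) 0 (by omega) (by omega) h
        exact hj0 (by apply Fin.ext; simp; omega)
      rw [mBo, triple_apply_ne _ _ _ _ _ (fun h => dys (j:ℕ) (by omega) h.symm) hz hz'] at h2
      omega
    rw [if_neg hAfalse, if_neg (hBfalse j), add_zero]
  -- the two surviving blocks
  set ja : Fin L := ⟨L - m, by omega⟩ with hja
  set j0 : Fin L := ⟨0, by omega⟩ with hj0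
  have hjav : (ja : ℕ) = L - m := rfl
  have hj0v : (j0 : ℕ) = 0 := rfl
  have hdSS0 : N.S i₀ (L - m) ≠ N.S i₀ 0 := by
    intro h; have := dss (L-m) 0 (by omega) (by omega) h; omega
  -- block ja
  have hAtrue : N.rA i₀ ja ≤ mBo N i₀ m := by
    rw [rA, hjav, mBo]
    intro t
    by_cases h1t : t = N.Y i₀
    · rw [h1t, pair_apply_fst _ _ _ (dys (L-m) (by omega)),
        triple_apply_fst _ _ _ _ (dys (L-m) (by omega)) (dys 0 (by omega))]
      omega
    by_cases h2t : t = N.S i₀ (L - m)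
    · rw [h2t, pair_apply_snd _ _ _ (dys (L-m) (by omega)),
        triple_apply_snd _ _ _ _ (fun h => dys (L-m) (by omega) h.symm) hdSS0]
    · rw [pair_apply_ne _ _ _ _ h1t h2t]
      exact Nat.zero_le _
  have hsplit : mBo N i₀ m = (single (N.Y i₀) (m-1) + single (N.S i₀ 0) 1) + N.rA i₀ ja := by
    rw [mBo, rA, hjav,
      show (single (N.Y i₀) m : σ →₀ ℕ) = single (N.Y i₀) (m-1) + single (N.Y i₀) 1 from by
        rw [← Finsupp.single_add]; congr 1; omega]
    abel
  have herA : mBo N i₀ m - N.rA i₀ ja = single (N.Y i₀) (m-1) + single (N.S i₀ 0) 1 := by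
    rw [hsplit, add_tsub_cancel_right]
  have hpcU : pc φ (mBo N i₀ m) (N.rA i₀ ja) (N.U i₀ ((ja : ℕ) + 1)) =
      coeff (mBe N i₀ (m-1)) φ := by
    unfold pc
    have hjU : (ja : ℕ) + 1 = L - (m-1) := by rw [hjav]; omega
    have hmon : (single (N.Y i₀) (m-1) + single (N.S i₀ 0) 1 : σ →₀ ℕ)
        + single (N.U i₀ (L - (m-1))) 1 = mBe N i₀ (m-1) := by
      rw [mBe]; abel
    rw [herA, hjU, hmon]
    have hap : (mBe N i₀ (m-1)) (N.U i₀ (L - (m-1))) = 1 := by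
      rw [mBe]
      exact triple_apply_snd _ _ _ _
        (fun h => dyu (L-(m-1)) (by omega) (by omega) h.symm)
        (fun h => dsu 0 (L-(m-1)) (by omega) (by omega) (by omega) h.symm)
    rw [hap]
    norm_num
  have hpcY : pc φ (mBo N i₀ m) (N.rA i₀ ja) (N.Y i₀) = 0 := by
    unfold pc
    rw [herA]
    rw [vanish N i₀ h1 part hp k (waOK N i₀ h1 part hp) (2*m) _ ?_, mul_zero]
    rw [Wt_single, Wt_triple, wa, wtOf_Y N i₀ h1 part hp,
      wtOf_S N i₀ h1 part hp _ _ _ _ L (le_refl _),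
      wtOf_S N i₀ h1 part hp _ _ _ _ 0 (by omega)]
    simp only [ρa]
    split_ifs <;> (push_cast; try omega)
  have hpcS : pc φ (mBo N i₀ m) (N.rA i₀ ja) (N.S i₀ (ja : ℕ)) = 0 := by
    unfold pc
    rw [herA, hjav]
    rw [vanish N i₀ h1 part hp k (waOK N i₀ h1 part hp) (2*m) _ ?_, mul_zero]
    rw [Wt_single, Wt_triple, wa, wtOf_Y N i₀ h1 part hp,
      wtOf_S N i₀ h1 part hp _ _ _ _ L (le_refl _),
      wtOf_S N i₀ h1 part hp _ _ _ _ 0 (by omega),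
      wtOf_S N i₀ h1 part hp _ _ _ _ (L-m) (by omega)]
    simp only [ρa]
    split_ifs <;> (push_cast; try omega)
  -- block j0
  have hAtrue0 : N.rA i₀ j0 ≤ mBo N i₀ m := by
    rw [rA, hj0v, mBo]
    intro t
    by_cases h1t : t = N.Y i₀
    · rw [h1t, pair_apply_fst _ _ _ (dys 0 (by omega)),
        triple_apply_fst _ _ _ _ (dys (L-m) (by omega)) (dys 0 (by omega))]
      omega
    by_cases h2t : t = N.S i₀ 0
    · rw [h2t, pair_apply_snd _ _ _ (dys 0 (by omega)),
        triple_apply_thd _ _ _ _ (fun h => dys 0 (by omega) h.symm)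
          (fun h => hdSS0 h.symm)]
    · rw [pair_apply_ne _ _ _ _ h1t h2t]
      exact Nat.zero_le _
  have hsplit0 : mBo N i₀ m
      = (single (N.Y i₀) (m-1) + single (N.S i₀ (L-m)) 1) + N.rA i₀ j0 := by
    rw [mBo, rA, hj0v,
      show (single (N.Y i₀) m : σ →₀ ℕ) = single (N.Y i₀) (m-1) + single (N.Y i₀) 1 from by
        rw [← Finsupp.single_add]; congr 1; omega]
    abel
  have herA0 : mBo N i₀ m - N.rA i₀ j0
      = single (N.Y i₀) (m-1) + single (N.S i₀ (L-m)) 1 := by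
    rw [hsplit0, add_tsub_cancel_right]
  have hpcY0 : pc φ (mBo N i₀ m) (N.rA i₀ j0) (N.Y i₀) =
      (m : ℝ) * coeff (mAe N i₀ m) φ := by
    unfold pc
    have hmon : (single (N.Y i₀) (m-1) + single (N.S i₀ (L-m)) 1 : σ →₀ ℕ)
        + single (N.Y i₀) 1 = mAe N i₀ m := by
      rw [mAe,
        show (single (N.Y i₀) m : σ →₀ ℕ) = single (N.Y i₀) (m-1) + single (N.Y i₀) 1 from by
          rw [← Finsupp.single_add]; congr 1; omega]
      abel
    rw [herA0, hmon]
    have hap : (mAe N i₀ m) (N.Y i₀) = m := by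
      rw [mAe]; exact pair_apply_fst _ _ _ (dys (L-m) (by omega))
    rw [hap]
  have hpcU0 : pc φ (mBo N i₀ m) (N.rA i₀ j0) (N.U i₀ ((j0 : ℕ) + 1)) = 0 := by
    unfold pc
    rw [herA0, hj0v]
    rw [vanish N i₀ h1 part hp k (waOK N i₀ h1 part hp) (2*m) _ ?_, mul_zero]
    rw [Wt_single, Wt_triple, wa, wtOf_Y N i₀ h1 part hp,
      wtOf_S N i₀ h1 part hp _ _ _ _ L (le_refl _),
      wtOf_S N i₀ h1 part hp _ _ _ _ (L-m) (by omega),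
      wtOf_U N i₀ h1 part hp _ _ _ _ (0+1) (by omega) (by omega)]
    simp only [ρa, τa]
    split_ifs <;> (push_cast; try omega)
  have hpcS0 : pc φ (mBo N i₀ m) (N.rA i₀ j0) (N.S i₀ (j0 : ℕ)) = 0 := by
    unfold pc
    rw [herA0, hj0v]
    rw [vanish N i₀ h1 part hp k (waOK N i₀ h1 part hp) (2*m) _ ?_, mul_zero]
    rw [Wt_single, Wt_triple, wa, wtOf_Y N i₀ h1 part hp,
      wtOf_S N i₀ h1 part hp _ _ _ _ L (le_refl _),
      wtOf_S N i₀ h1 part hp _ _ _ _ (L-m) (by omega),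
      wtOf_S N i₀ h1 part hp _ _ _ _ 0 (by omega)]
    simp only [ρa]
    split_ifs <;> (push_cast; try omega)
  rw [if_pos hAtrue, if_pos hAtrue0, if_neg (hBfalse ja), if_neg (hBfalse j0)]
  rw [hpcU, hpcY, hpcS, hpcY0, hpcU0, hpcS0]
  have hpar1 : k ⟨i₀, ja, 0⟩ = par N i₀ k 0 (L - m) := by
    rw [par, dif_pos (by omega : L - m < L)]
  have hpar2 : k ⟨i₀, j0, 0⟩ = par N i₀ k 0 0 := by
    rw [par, dif_pos (by omega : 0 < L)]
  rw [← hpar1, ← hpar2]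
  ring

variable (h1 : N.Assumption1) (part : σ → ℕ) (hp : N.IsPartition part)

include h1 hp

/-- The even type-a step. -/
lemma stepA_even (k : N.Param → ℝ) (m : ℕ) (hm1 : 1 ≤ m) (hm : m + 2 ≤ N.L i₀) :
    coeff (mBe N i₀ m) (N.deriv k (2*m+2) (N.S i₀ (N.L i₀))) =
      par N i₀ k 2 (N.L i₀ - 1 - m) *
          coeff (mBo N i₀ m) (N.deriv k (2*m+1) (N.S i₀ (N.L i₀)))
        - par N i₀ k 0 0 * m * coeff (mAo N i₀ m) (N.deriv k (2*m+1) (N.S i₀ (N.L i₀))) := by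
  have hL := N.Lpos i₀
  set L := N.L i₀ with hLdef
  have dys : ∀ r ≤ L, N.Y i₀ ≠ N.S i₀ r := dYS N i₀ h1 part hp
  have dyu : ∀ r, 1 ≤ r → r ≤ L → N.Y i₀ ≠ N.U i₀ r := dYU N i₀ h1
  have dsu : ∀ r r', r ≤ L → 1 ≤ r' → r' ≤ L → N.S i₀ r ≠ N.U i₀ r' := dSU N i₀ h1
  have dss : ∀ r r', r ≤ L → r' ≤ L → N.S i₀ r = N.S i₀ r' → r = r' := dSS N i₀ h1
  have duu : ∀ r r', 1 ≤ r → r ≤ L → 1 ≤ r' → r' ≤ L → N.U i₀ r = N.U i₀ r' → r = r' :=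
    dUU N i₀ h1
  have φdef : N.deriv k (2*m+2) (N.S i₀ L) = lieD (N.rhs k) (N.deriv k (2*m+1) (N.S i₀ L)) :=
    rfl
  set φ := N.deriv k (2*m+1) (N.S i₀ L) with hφ
  have hsupp : ∀ t, (mBe N i₀ m) t ≠ 0 → kept N i₀ t := by
    rw [mBe]
    exact supp_triple N i₀ _ _ _ _ (keptY N i₀ h1 part hp)
      (keptU' N i₀ h1 part hp (L - m) (by omega) (by omega)) (keptS N i₀ h1 part hp 0 (by omega))
  rw [φdef, coeff_lieD_comp N i₀ h1 part hp k φ _ hsupp]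
  have hAfalse : ∀ j : Fin L, (j : ℕ) ≠ 0 → ¬ (N.rA i₀ j ≤ mBe N i₀ m) := by
    intro j hj hle
    have h2 := le_rA_S hle
    rw [mBe, triple_apply_ne _ _ _ _ _ (fun h => dys (j:ℕ) (by omega) h.symm)
      (fun h => dsu (j:ℕ) (L-m) (by omega) (by omega) (by omega) h)
      (fun h => hj (dss (j:ℕ) 0 (by omega) (by omega) h))] at h2
    omega
  rw [sum_pair_eq _ (⟨L - 1 - m, by omega⟩ : Fin L) (⟨0, by omega⟩ : Fin L)
    (by intro h; rw [Fin.mk.injEq] at h; omega) ?hkill]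
  case hkill =>
    intro j hjb hj0
    have hj0' : (j : ℕ) ≠ 0 := fun h => hj0 (by apply Fin.ext; simpa using h)
    have hBf : ¬ (N.rB i₀ j ≤ mBe N i₀ m) := by
      intro hle
      have h2 := le_rB_U hle
      have hz : N.U i₀ ((j:ℕ)+1) ≠ N.U i₀ (L-m) := by
        intro h
        have := duu ((j:ℕ)+1) (L-m) (by omega) (by omega) (by omega) (by omega) h
        exact hjb (by apply Fin.ext; simp; omega)
      rw [mBe, triple_apply_ne _ _ _ _ _
        (fun h => dyu ((j:ℕ)+1) (by omega) (by omega) h.symm) hz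
        (fun h => dsu 0 ((j:ℕ)+1) (by omega) (by omega) (by omega) h.symm)] at h2
      omega
    rw [if_neg (hAfalse j hj0'), if_neg hBf, add_zero]
  set jb : Fin L := ⟨L - 1 - m, by omega⟩ with hjb
  set j0 : Fin L := ⟨0, by omega⟩ with hj0
  have hjbv : (jb : ℕ) = L - m - 1 := by simp [hjb]; omega
  have hjbU : (jb : ℕ) + 1 = L - m := by rw [hjbv]; omega
  have hj0v : (j0 : ℕ) = 0 := rfl
  -- block jb : the c-step
  have hAfb : ¬ (N.rA i₀ jb ≤ mBe N i₀ m) := hAfalse jb (by rw [hjbv]; omega)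
  have hBtrue : N.rB i₀ jb ≤ mBe N i₀ m := by
    rw [rB, hjbU, mBe]
    intro t
    rw [Finsupp.single_apply]
    split_ifs with h
    · rw [← h, triple_apply_snd _ _ _ _ (fun hh => dyu (L-m) (by omega) (by omega) hh.symm)
        (fun hh => dsu 0 (L-m) (by omega) (by omega) (by omega) hh.symm)]
    · exact Nat.zero_le _
  have hsplitB : mBe N i₀ m
      = (single (N.Y i₀) m + single (N.S i₀ 0) 1) + N.rB i₀ jb := by
    rw [mBe, rB, hjbU]; abel
  have herB : mBe N i₀ m - N.rB i₀ jb = single (N.Y i₀) m + single (N.S i₀ 0) 1 := by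
    rw [hsplitB, add_tsub_cancel_right]
  have hpcYb : pc φ (mBe N i₀ m) (N.rB i₀ jb) (N.Y i₀) = 0 := by
    unfold pc
    rw [herB]
    rw [vanish N i₀ h1 part hp k (waOK N i₀ h1 part hp) (2*m+1) _ ?_, mul_zero]
    rw [Wt_single, Wt_triple, wa, wtOf_Y N i₀ h1 part hp,
      wtOf_S N i₀ h1 part hp _ _ _ _ L (le_refl _),
      wtOf_S N i₀ h1 part hp _ _ _ _ 0 (by omega)]
    simp only [ρa]
    split_ifs <;> (push_cast; try omega)
  have hpcSb : pc φ (mBe N i₀ m) (N.rB i₀ jb) (N.S i₀ (jb : ℕ)) = 0 := by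
    unfold pc
    rw [herB, hjbv]
    rw [vanish N i₀ h1 part hp k (waOK N i₀ h1 part hp) (2*m+1) _ ?_, mul_zero]
    rw [Wt_single, Wt_triple, wa, wtOf_Y N i₀ h1 part hp,
      wtOf_S N i₀ h1 part hp _ _ _ _ L (le_refl _),
      wtOf_S N i₀ h1 part hp _ _ _ _ 0 (by omega),
      wtOf_S N i₀ h1 part hp _ _ _ _ (L-m-1) (by omega)]
    simp only [ρa]
    split_ifs <;> (push_cast; try omega)
  have hpcUb : pc φ (mBe N i₀ m) (N.rB i₀ jb) (N.U i₀ ((jb : ℕ)+1)) = 0 := by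
    unfold pc
    rw [herB, hjbU]
    rw [vanish N i₀ h1 part hp k (waOK N i₀ h1 part hp) (2*m+1) _ ?_, mul_zero]
    rw [Wt_single, Wt_triple, wa, wtOf_Y N i₀ h1 part hp,
      wtOf_S N i₀ h1 part hp _ _ _ _ L (le_refl _),
      wtOf_S N i₀ h1 part hp _ _ _ _ 0 (by omega),
      wtOf_U N i₀ h1 part hp _ _ _ _ (L-m) (by omega) (by omega)]
    simp only [ρa, τa]
    split_ifs <;> (push_cast; try omega)
  have hpcTb : pc φ (mBe N i₀ m) (N.rB i₀ jb) (N.S i₀ ((jb : ℕ)+1)) =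
      coeff (mBo N i₀ m) φ := by
    unfold pc
    have hmon : (single (N.Y i₀) m + single (N.S i₀ 0) 1 : σ →₀ ℕ)
        + single (N.S i₀ (L-m)) 1 = mBo N i₀ m := by
      rw [mBo]; abel
    rw [herB, hjbU, hmon]
    have hap : (mBo N i₀ m) (N.S i₀ (L-m)) = 1 := by
      rw [mBo]
      exact triple_apply_snd _ _ _ _ (fun h => dys (L-m) (by omega) h.symm)
        (fun h => (by omega : L - m ≠ 0) (dss (L-m) 0 (by omega) (by omega) h))
    rw [hap]
    norm_num
  -- block j0 : the insertion step
  have hBf0 : ¬ (N.rB i₀ j0 ≤ mBe N i₀ m) := by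
    intro hle
    have h2 := le_rB_U hle
    have hz : N.U i₀ ((j0:ℕ)+1) ≠ N.U i₀ (L-m) := by
      rw [hj0v]
      intro h
      have := duu 1 (L-m) (by omega) (by omega) (by omega) (by omega) h
      omega
    rw [mBe, triple_apply_ne _ _ _ _ _
      (fun h => dyu ((j0:ℕ)+1) (by omega) (by omega) h.symm) hz
      (fun h => dsu 0 ((j0:ℕ)+1) (by omega) (by omega) (by omega) h.symm)] at h2
    omega
  have hAtrue0 : N.rA i₀ j0 ≤ mBe N i₀ m := by
    rw [rA, hj0v, mBe]
    intro t
    by_cases h1t : t = N.Y i₀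
    · rw [h1t, pair_apply_fst _ _ _ (dys 0 (by omega)),
        triple_apply_fst _ _ _ _ (dyu (L-m) (by omega) (by omega)) (dys 0 (by omega))]
      omega
    by_cases h2t : t = N.S i₀ 0
    · rw [h2t, pair_apply_snd _ _ _ (dys 0 (by omega)),
        triple_apply_thd _ _ _ _ (fun h => dys 0 (by omega) h.symm)
          (fun h => dsu 0 (L-m) (by omega) (by omega) (by omega) h)]
    · rw [pair_apply_ne _ _ _ _ h1t h2t]
      exact Nat.zero_le _
  have hsplit0 : mBe N i₀ m
      = (single (N.Y i₀) (m-1) + single (N.U i₀ (L-m)) 1) + N.rA i₀ j0 := by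
    rw [mBe, rA, hj0v,
      show (single (N.Y i₀) m : σ →₀ ℕ) = single (N.Y i₀) (m-1) + single (N.Y i₀) 1 from by
        rw [← Finsupp.single_add]; congr 1; omega]
    abel
  have herA0 : mBe N i₀ m - N.rA i₀ j0
      = single (N.Y i₀) (m-1) + single (N.U i₀ (L-m)) 1 := by
    rw [hsplit0, add_tsub_cancel_right]
  have hpcY0 : pc φ (mBe N i₀ m) (N.rA i₀ j0) (N.Y i₀) =
      (m : ℝ) * coeff (mAo N i₀ m) φ := by
    unfold pc
    have hmon : (single (N.Y i₀) (m-1) + single (N.U i₀ (L-m)) 1 : σ →₀ ℕ)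
        + single (N.Y i₀) 1 = mAo N i₀ m := by
      rw [mAo,
        show (single (N.Y i₀) m : σ →₀ ℕ) = single (N.Y i₀) (m-1) + single (N.Y i₀) 1 from by
          rw [← Finsupp.single_add]; congr 1; omega]
      abel
    rw [herA0, hmon]
    have hap : (mAo N i₀ m) (N.Y i₀) = m := by
      rw [mAo]; exact pair_apply_fst _ _ _ (dyu (L-m) (by omega) (by omega))
    rw [hap]
  have hpcU0 : pc φ (mBe N i₀ m) (N.rA i₀ j0) (N.U i₀ ((j0 : ℕ) + 1)) = 0 := by
    unfold pc
    rw [herA0, hj0v]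
    rw [vanish N i₀ h1 part hp k (waOK N i₀ h1 part hp) (2*m+1) _ ?_, mul_zero]
    rw [Wt_single, Wt_triple, wa, wtOf_Y N i₀ h1 part hp,
      wtOf_S N i₀ h1 part hp _ _ _ _ L (le_refl _),
      wtOf_U N i₀ h1 part hp _ _ _ _ (L-m) (by omega) (by omega),
      wtOf_U N i₀ h1 part hp _ _ _ _ (0+1) (by omega) (by omega)]
    simp only [ρa, τa]
    split_ifs <;> (push_cast; try omega)
  have hpcS0 : pc φ (mBe N i₀ m) (N.rA i₀ j0) (N.S i₀ (j0 : ℕ)) = 0 := by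
    unfold pc
    rw [herA0, hj0v]
    rw [vanish N i₀ h1 part hp k (waOK N i₀ h1 part hp) (2*m+1) _ ?_, mul_zero]
    rw [Wt_single, Wt_triple, wa, wtOf_Y N i₀ h1 part hp,
      wtOf_S N i₀ h1 part hp _ _ _ _ L (le_refl _),
      wtOf_U N i₀ h1 part hp _ _ _ _ (L-m) (by omega) (by omega),
      wtOf_S N i₀ h1 part hp _ _ _ _ 0 (by omega)]
    simp only [ρa, τa]
    split_ifs <;> (push_cast; try omega)
  rw [if_neg hAfb, if_pos hBtrue, if_pos hAtrue0, if_neg hBf0]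
  rw [hpcYb, hpcSb, hpcUb, hpcTb, hpcY0, hpcU0, hpcS0]
  have hpar1 : k ⟨i₀, jb, 2⟩ = par N i₀ k 2 (L - 1 - m) := by
    rw [par, dif_pos (by omega : L - 1 - m < L)]
  have hpar2 : k ⟨i₀, j0, 0⟩ = par N i₀ k 0 0 := by
    rw [par, dif_pos (by omega : 0 < L)]
  rw [← hpar1, ← hpar2]
  ring

/-- Base: `coeff(s_L s_0, φ_1) = 0`. -/
lemma stepA_base1 (k : N.Param → ℝ) (hL2 : 2 ≤ N.L i₀) :
    coeff (mBo N i₀ 0) (N.deriv k 1 (N.S i₀ (N.L i₀))) = 0 := by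
  have hL := N.Lpos i₀
  set L := N.L i₀ with hLdef
  have dys : ∀ r ≤ L, N.Y i₀ ≠ N.S i₀ r := dYS N i₀ h1 part hp
  have dsu : ∀ r r', r ≤ L → 1 ≤ r' → r' ≤ L → N.S i₀ r ≠ N.U i₀ r' := dSU N i₀ h1
  have φdef : N.deriv k 1 (N.S i₀ L) = lieD (N.rhs k) (N.deriv k 0 (N.S i₀ L)) := rfl
  have hsupp : ∀ t, (mBo N i₀ 0) t ≠ 0 → kept N i₀ t := by
    rw [mBo]
    exact supp_triple N i₀ _ _ _ _ (keptY N i₀ h1 part hp)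
      (keptS N i₀ h1 part hp (L - 0) (by omega)) (keptS N i₀ h1 part hp 0 (by omega))
  rw [φdef, coeff_lieD_comp N i₀ h1 part hp k _ _ hsupp]
  apply Finset.sum_eq_zero
  intro j _
  have hAf : ¬ (N.rA i₀ j ≤ mBo N i₀ 0) := by
    intro hle
    have h2 := le_rA_Y hle
    rw [mBo, triple_apply_fst _ _ _ _ (dys (L-0) (by omega)) (dys 0 (by omega))] at h2
    omega
  have hBf : ¬ (N.rB i₀ j ≤ mBo N i₀ 0) := by
    intro hle
    have h2 := le_rB_U hle
    rw [mBo, triple_apply_ne _ _ _ _ _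
      (fun h => (dYU N i₀ h1 ((j:ℕ)+1) (by omega) (by omega)) h.symm)
      (fun h => dsu (L-0) ((j:ℕ)+1) (by omega) (by omega) (by omega) h.symm)
      (fun h => dsu 0 ((j:ℕ)+1) (by omega) (by omega) (by omega) h.symm)] at h2
    omega
  rw [if_neg hAf, if_neg hBf, add_zero]

/-- Base: `coeff(u_L s_0, φ_2) = 0`. -/
lemma stepA_base2 (k : N.Param → ℝ) (hL2 : 2 ≤ N.L i₀) :
    coeff (mBe N i₀ 0) (N.deriv k 2 (N.S i₀ (N.L i₀))) = 0 := by
  have hL := N.Lpos i₀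
  set L := N.L i₀ with hLdef
  have dys : ∀ r ≤ L, N.Y i₀ ≠ N.S i₀ r := dYS N i₀ h1 part hp
  have dyu : ∀ r, 1 ≤ r → r ≤ L → N.Y i₀ ≠ N.U i₀ r := dYU N i₀ h1
  have dsu : ∀ r r', r ≤ L → 1 ≤ r' → r' ≤ L → N.S i₀ r ≠ N.U i₀ r' := dSU N i₀ h1
  have duu : ∀ r r', 1 ≤ r → r ≤ L → 1 ≤ r' → r' ≤ L → N.U i₀ r = N.U i₀ r' → r = r' :=
    dUU N i₀ h1
  have φdef : N.deriv k 2 (N.S i₀ L) = lieD (N.rhs k) (N.deriv k 1 (N.S i₀ L)) := rfl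
  set φ := N.deriv k 1 (N.S i₀ L) with hφ
  have hsupp : ∀ t, (mBe N i₀ 0) t ≠ 0 → kept N i₀ t := by
    rw [mBe]
    exact supp_triple N i₀ _ _ _ _ (keptY N i₀ h1 part hp)
      (keptU' N i₀ h1 part hp (L - 0) (by omega) (by omega)) (keptS N i₀ h1 part hp 0 (by omega))
  rw [φdef, coeff_lieD_comp N i₀ h1 part hp k φ _ hsupp]
  have hAfalse : ∀ j : Fin L, ¬ (N.rA i₀ j ≤ mBe N i₀ 0) := by
    intro j hle
    have h2 := le_rA_Y hle
    rw [mBe, triple_apply_fst _ _ _ _ (dyu (L-0) (by omega) (by omega)) (dys 0 (by omega))] at h2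
    omega
  rw [Finset.sum_eq_single_of_mem (⟨L - 1, by omega⟩ : Fin L) (Finset.mem_univ _)]
  · set jb : Fin L := ⟨L - 1, by omega⟩ with hjb
    have hjbU : (jb : ℕ) + 1 = L - 0 := by simp [hjb]; omega
    have hBtrue : N.rB i₀ jb ≤ mBe N i₀ 0 := by
      rw [rB, hjbU, mBe]
      intro t
      rw [Finsupp.single_apply]
      split_ifs with h
      · rw [← h, triple_apply_snd _ _ _ _ (fun hh => dyu (L-0) (by omega) (by omega) hh.symm)
          (fun hh => dsu 0 (L-0) (by omega) (by omega) (by omega) hh.symm)]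
      · exact Nat.zero_le _
    rw [if_neg (hAfalse jb), if_pos hBtrue]
    have hsplitB : mBe N i₀ 0
        = (single (N.Y i₀) 0 + single (N.S i₀ 0) 1) + N.rB i₀ jb := by
      rw [mBe, rB, hjbU]; abel
    have herB : mBe N i₀ 0 - N.rB i₀ jb = single (N.Y i₀) 0 + single (N.S i₀ 0) 1 := by
      rw [hsplitB, add_tsub_cancel_right]
    have hpcYb : pc φ (mBe N i₀ 0) (N.rB i₀ jb) (N.Y i₀) = 0 := by
      unfold pc
      rw [herB]
      rw [vanish N i₀ h1 part hp k (waOK N i₀ h1 part hp) 1 _ ?_, mul_zero]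
      rw [Wt_single, Wt_triple, wa, wtOf_Y N i₀ h1 part hp,
        wtOf_S N i₀ h1 part hp _ _ _ _ L (le_refl _),
        wtOf_S N i₀ h1 part hp _ _ _ _ 0 (by omega)]
      simp only [ρa]
      split_ifs <;> (push_cast; try omega)
    have hpcSb : pc φ (mBe N i₀ 0) (N.rB i₀ jb) (N.S i₀ (jb : ℕ)) = 0 := by
      unfold pc
      rw [herB, show ((jb : ℕ)) = L - 1 from rfl]
      rw [vanish N i₀ h1 part hp k (waOK N i₀ h1 part hp) 1 _ ?_, mul_zero]
      rw [Wt_single, Wt_triple, wa, wtOf_Y N i₀ h1 part hp,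
        wtOf_S N i₀ h1 part hp _ _ _ _ L (le_refl _),
        wtOf_S N i₀ h1 part hp _ _ _ _ 0 (by omega),
        wtOf_S N i₀ h1 part hp _ _ _ _ (L-1) (by omega)]
      simp only [ρa]
      split_ifs <;> (push_cast; try omega)
    have hpcUb : pc φ (mBe N i₀ 0) (N.rB i₀ jb) (N.U i₀ ((jb : ℕ)+1)) = 0 := by
      unfold pc
      rw [herB, hjbU]
      rw [vanish N i₀ h1 part hp k (waOK N i₀ h1 part hp) 1 _ ?_, mul_zero]
      rw [Wt_single, Wt_triple, wa, wtOf_Y N i₀ h1 part hp,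
        wtOf_S N i₀ h1 part hp _ _ _ _ L (le_refl _),
        wtOf_S N i₀ h1 part hp _ _ _ _ 0 (by omega),
        wtOf_U N i₀ h1 part hp _ _ _ _ (L-0) (by omega) (by omega)]
      simp only [ρa, τa]
      split_ifs <;> (push_cast; try omega)
    have hpcTb : pc φ (mBe N i₀ 0) (N.rB i₀ jb) (N.S i₀ ((jb : ℕ)+1)) =
        coeff (mBo N i₀ 0) φ := by
      unfold pc
      have hmon : (single (N.Y i₀) 0 + single (N.S i₀ 0) 1 : σ →₀ ℕ)
          + single (N.S i₀ (L-0)) 1 = mBo N i₀ 0 := by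
        rw [mBo]; abel
      rw [herB, hjbU, hmon]
      have hap : (mBo N i₀ 0) (N.S i₀ (L-0)) = 1 := by
        rw [mBo]
        exact triple_apply_snd _ _ _ _ (fun h => dys (L-0) (by omega) h.symm)
          (fun h => (by omega : L - 0 ≠ 0) (dSS N i₀ h1 (L-0) 0 (by omega) (by omega) h))
      rw [hap]
      norm_num
    rw [hpcYb, hpcSb, hpcUb, hpcTb, stepA_base1 N i₀ h1 part hp k hL2]
    ring
  · intro j _ hne
    have hBf : ¬ (N.rB i₀ j ≤ mBe N i₀ 0) := by
      intro hle
      have h2 := le_rB_U hle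
      have hz : N.U i₀ ((j:ℕ)+1) ≠ N.U i₀ (L-0) := by
        intro h
        have := duu ((j:ℕ)+1) (L-0) (by omega) (by omega) (by omega) (by omega) h
        exact hne (by apply Fin.ext; simp; omega)
      rw [mBe, triple_apply_ne _ _ _ _ _
        (fun h => dyu ((j:ℕ)+1) (by omega) (by omega) h.symm) hz
        (fun h => dsu 0 ((j:ℕ)+1) (by omega) (by omega) (by omega) h.symm)] at h2
      omega
    rw [if_neg (hAfalse j), if_neg hBf, add_zero]

/-- The type-a tracked values. -/
lemma typeA_vals (k : N.Param → ℝ) : ∀ m, 1 ≤ m → m + 1 ≤ N.L i₀ →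
    coeff (mBo N i₀ m) (N.deriv k (2*m+1) (N.S i₀ (N.L i₀))) =
      -(m:ℝ)^2 * par N i₀ k 0 0 * Pch N i₀ k m ∧
    (m + 2 ≤ N.L i₀ → coeff (mBe N i₀ m) (N.deriv k (2*m+2) (N.S i₀ (N.L i₀))) =
      -(m:ℝ) * ((m:ℝ)+1) * par N i₀ k 0 0 * Pch N i₀ k m * par N i₀ k 2 (N.L i₀ - 1 - m)) := by
  intro m
  induction m with
  | zero => intro h; omega
  | succ m ih =>
    intro _ hm
    have hstep : ∀ mm, 1 ≤ mm → mm + 1 ≤ N.L i₀ →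
        coeff (mBo N i₀ mm) (N.deriv k (2*mm+1) (N.S i₀ (N.L i₀))) =
          par N i₀ k 0 (N.L i₀ - mm) *
              coeff (mBe N i₀ (mm-1)) (N.deriv k (2*mm) (N.S i₀ (N.L i₀)))
            - par N i₀ k 0 0 * mm * Pch N i₀ k mm := by
      intro mm h1m hmL
      rw [stepA_odd N i₀ h1 part hp k mm h1m hmL,
        (chain_vals N i₀ h1 part hp k mm (by omega)).1]
    rcases Nat.eq_or_lt_of_le (show 1 ≤ m + 1 from by omega) with hone | hone
    · -- m + 1 = 1, i.e. m = 0
      have hm0 : m = 0 := by omega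
      subst hm0
      have hbo : coeff (mBo N i₀ 1) (N.deriv k (2*1+1) (N.S i₀ (N.L i₀))) =
          -(1:ℝ)^2 * par N i₀ k 0 0 * Pch N i₀ k 1 := by
        rw [hstep 1 (by omega) (by omega)]
        rw [show (2*1 : ℕ) = 2 from rfl, show ((1:ℕ) - 1) = 0 from rfl,
          stepA_base2 N i₀ h1 part hp k (by omega)]
        push_cast
        ring
      constructor
      · exact_mod_cast hbo
      · intro hm2
        rw [show 2*1+2 = 2*1+2 from rfl, stepA_even N i₀ h1 part hp k 1 (by omega) (by omega),
          hbo, (chain_vals N i₀ h1 part hp k 1 (by omega)).2 (by omega)]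
        push_cast
        ring
    · -- m ≥ 1
      have hm1 : 1 ≤ m := by omega
      have hprev := ih hm1 (by omega)
      have hbe := hprev.2 (by omega)
      have hbo : coeff (mBo N i₀ (m+1)) (N.deriv k (2*(m+1)+1) (N.S i₀ (N.L i₀))) =
          -((m:ℝ)+1)^2 * par N i₀ k 0 0 * Pch N i₀ k (m+1) := by
        rw [hstep (m+1) (by omega) (by omega),
          show (m+1) - 1 = m from by omega,
          show 2*(m+1) = 2*m+2 from by ring, hbe]
        rw [show Pch N i₀ k (m+1) = Pch N i₀ k m *
            (par N i₀ k 2 (N.L i₀ - 1 - m) * par N i₀ k 0 (N.L i₀ - 1 - m)) from rfl]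
        rw [show N.L i₀ - (m+1) = N.L i₀ - 1 - m from by omega]
        push_cast
        ring
      constructor
      · rw [hbo]; push_cast; ring
      · intro hm2
        rw [show 2*(m+1)+2 = 2*(m+1)+2 from rfl,
          stepA_even N i₀ h1 part hp k (m+1) (by omega) (by omega), hbo,
          (chain_vals N i₀ h1 part hp k (m+1) (by omega)).2 (by omega)]
        push_cast
        ring

lemma typeA_final (k : N.Param → ℝ) (hL2 : 2 ≤ N.L i₀) :
    coeff (mBo N i₀ (N.L i₀ - 1)) (N.deriv k (2*(N.L i₀)-1) (N.S i₀ (N.L i₀))) =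
      -(((N.L i₀ - 1 : ℕ) : ℝ)^2) * par N i₀ k 0 0 * Pch N i₀ k (N.L i₀ - 1) := by
  have hL := N.Lpos i₀
  have h := (typeA_vals N i₀ h1 part hp k (N.L i₀ - 1) (by omega) (by omega)).1
  rw [show 2*(N.L i₀ - 1)+1 = 2*(N.L i₀)-1 from by omega] at h
  rw [h]

/-- The odd type-K step (`m ≥ 2`). -/
lemma stepK_odd (k : N.Param → ℝ) (m : ℕ) (hm1 : 2 ≤ m) (hm : m + 1 ≤ N.L i₀) :
    coeff (mKo N i₀ m) (N.deriv k (2*m+1) (N.S i₀ (N.L i₀))) =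
      par N i₀ k 0 (N.L i₀ - m) *
          coeff (mKe N i₀ (m-1)) (N.deriv k (2*m) (N.S i₀ (N.L i₀)))
        + (par N i₀ k 1 0 + par N i₀ k 2 0) * m *
          coeff (mAe N i₀ m) (N.deriv k (2*m) (N.S i₀ (N.L i₀))) := by
  have hL := N.Lpos i₀
  set L := N.L i₀ with hLdef
  have dys : ∀ r ≤ L, N.Y i₀ ≠ N.S i₀ r := dYS N i₀ h1 part hp
  have dyu : ∀ r, 1 ≤ r → r ≤ L → N.Y i₀ ≠ N.U i₀ r := dYU N i₀ h1
  have dsu : ∀ r r', r ≤ L → 1 ≤ r' → r' ≤ L → N.S i₀ r ≠ N.U i₀ r' := dSU N i₀ h1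
  have dss : ∀ r r', r ≤ L → r' ≤ L → N.S i₀ r = N.S i₀ r' → r = r' := dSS N i₀ h1
  have duu : ∀ r r', 1 ≤ r → r ≤ L → 1 ≤ r' → r' ≤ L → N.U i₀ r = N.U i₀ r' → r = r' :=
    dUU N i₀ h1
  have φdef : N.deriv k (2*m+1) (N.S i₀ L) = lieD (N.rhs k) (N.deriv k (2*m) (N.S i₀ L)) :=
    rfl
  set φ := N.deriv k (2*m) (N.S i₀ L) with hφ
  have hsupp : ∀ t, (mKo N i₀ m) t ≠ 0 → kept N i₀ t := by
    rw [mKo]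
    exact supp_triple N i₀ _ _ _ _ (keptY N i₀ h1 part hp)
      (keptS N i₀ h1 part hp (L - m) (by omega)) (keptU' N i₀ h1 part hp 1 (by omega) (by omega))
  rw [φdef, coeff_lieD_comp N i₀ h1 part hp k φ _ hsupp]
  have hBfalse : ∀ j : Fin L, (j : ℕ) ≠ 0 → ¬ (N.rB i₀ j ≤ mKo N i₀ m) := by
    intro j hj hle
    have h2 := le_rB_U hle
    have hz' : N.U i₀ ((j:ℕ)+1) ≠ N.U i₀ 1 := by
      intro h
      have := duu ((j:ℕ)+1) 1 (by omega) (by omega) (by omega) (by omega) h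
      omega
    rw [mKo, triple_apply_ne _ _ _ _ _
      (fun h => dyu ((j:ℕ)+1) (by omega) (by omega) h.symm)
      (fun h => dsu (L-m) ((j:ℕ)+1) (by omega) (by omega) (by omega) h.symm) hz'] at h2
    omega
  rw [sum_pair_eq _ (⟨L - m, by omega⟩ : Fin L) (⟨0, by omega⟩ : Fin L)
    (by intro h; rw [Fin.mk.injEq] at h; omega) ?hkill]
  case hkill =>
    intro j hja hj0
    have hj0' : (j : ℕ) ≠ 0 := fun h => hj0 (by apply Fin.ext; simpa using h)
    have hAfalse : ¬ (N.rA i₀ j ≤ mKo N i₀ m) := by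
      intro hle
      have h2 := le_rA_S hle
      have hz : N.S i₀ (j : ℕ) ≠ N.S i₀ (L - m) := by
        intro h
        have := dss (j:ℕ) (L-m) (by omega) (by omega) h
        exact hja (by apply Fin.ext; simp; omega)
      rw [mKo, triple_apply_ne _ _ _ _ _ (fun h => dys (j:ℕ) (by omega) h.symm) hz
        (fun h => dsu (j:ℕ) 1 (by omega) (by omega) (by omega) h)] at h2
      omega
    rw [if_neg hAfalse, if_neg (hBfalse j hj0'), add_zero]
  set ja : Fin L := ⟨L - m, by omega⟩ with hja
  set j0 : Fin L := ⟨0, by omega⟩ with hj0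
  have hjav : (ja : ℕ) = L - m := rfl
  have hj0v : (j0 : ℕ) = 0 := rfl
  -- block ja : the creation step
  have hBfa : ¬ (N.rB i₀ ja ≤ mKo N i₀ m) := hBfalse ja (by rw [hjav]; omega)
  have hAtrue : N.rA i₀ ja ≤ mKo N i₀ m := by
    rw [rA, hjav, mKo]
    intro t
    by_cases h1t : t = N.Y i₀
    · rw [h1t, pair_apply_fst _ _ _ (dys (L-m) (by omega)),
        triple_apply_fst _ _ _ _ (dys (L-m) (by omega)) (dyu 1 (by omega) (by omega))]
      omega
    by_cases h2t : t = N.S i₀ (L - m)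
    · rw [h2t, pair_apply_snd _ _ _ (dys (L-m) (by omega)),
        triple_apply_snd _ _ _ _ (fun h => dys (L-m) (by omega) h.symm)
          (dsu (L-m) 1 (by omega) (by omega) (by omega))]
    · rw [pair_apply_ne _ _ _ _ h1t h2t]
      exact Nat.zero_le _
  have hsplit : mKo N i₀ m
      = (single (N.Y i₀) (m-2) + single (N.U i₀ 1) 1) + N.rA i₀ ja := by
    rw [mKo, rA, hjav,
      show (single (N.Y i₀) (m-1) : σ →₀ ℕ)
          = single (N.Y i₀) (m-2) + single (N.Y i₀) 1 from by
        rw [← Finsupp.single_add]; congr 1; omega]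
    abel
  have herA : mKo N i₀ m - N.rA i₀ ja = single (N.Y i₀) (m-2) + single (N.U i₀ 1) 1 := by
    rw [hsplit, add_tsub_cancel_right]
  have hpcU : pc φ (mKo N i₀ m) (N.rA i₀ ja) (N.U i₀ ((ja : ℕ) + 1)) =
      coeff (mKe N i₀ (m-1)) φ := by
    unfold pc
    have hjU : (ja : ℕ) + 1 = L - (m-1) := by rw [hjav]; omega
    have hmon : (single (N.Y i₀) (m-2) + single (N.U i₀ 1) 1 : σ →₀ ℕ)
        + single (N.U i₀ (L - (m-1))) 1 = mKe N i₀ (m-1) := by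
      rw [mKe, show m - 1 - 1 = m - 2 from by omega]; abel
    rw [herA, hjU, hmon]
    have hap : (mKe N i₀ (m-1)) (N.U i₀ (L - (m-1))) = 1 := by
      rw [mKe, show m - 1 - 1 = m - 2 from by omega]
      refine triple_apply_snd _ _ _ _
        (fun h => dyu (L-(m-1)) (by omega) (by omega) h.symm) ?_
      intro h
      have := duu (L-(m-1)) 1 (by omega) (by omega) (by omega) (by omega) h
      omega
    rw [hap]
    norm_num
  have hpcY : pc φ (mKo N i₀ m) (N.rA i₀ ja) (N.Y i₀) = 0 := by
    unfold pc
    rw [herA]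
    rw [vanish N i₀ h1 part hp k (wKOK N i₀ h1 part hp) (2*m) _ ?_, mul_zero]
    rw [Wt_single, Wt_triple, wK, wtOf_Y N i₀ h1 part hp,
      wtOf_S N i₀ h1 part hp _ _ _ _ L (le_refl _),
      wtOf_U N i₀ h1 part hp _ _ _ _ 1 (by omega) (by omega)]
    simp only [ρK, τK]
    split_ifs <;> (push_cast; try omega)
  have hpcS : pc φ (mKo N i₀ m) (N.rA i₀ ja) (N.S i₀ (ja : ℕ)) = 0 := by
    unfold pc
    rw [herA, hjav]
    rw [vanish N i₀ h1 part hp k (wKOK N i₀ h1 part hp) (2*m) _ ?_, mul_zero]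
    rw [Wt_single, Wt_triple, wK, wtOf_Y N i₀ h1 part hp,
      wtOf_S N i₀ h1 part hp _ _ _ _ L (le_refl _),
      wtOf_U N i₀ h1 part hp _ _ _ _ 1 (by omega) (by omega),
      wtOf_S N i₀ h1 part hp _ _ _ _ (L-m) (by omega)]
    simp only [ρK, τK]
    split_ifs <;> (push_cast; try omega)
  -- block j0 : the swap-y step
  have hAf0 : ¬ (N.rA i₀ j0 ≤ mKo N i₀ m) := by
    intro hle
    have h2 := le_rA_S hle
    rw [hj0v] at h2
    have hz : N.S i₀ 0 ≠ N.S i₀ (L - m) := by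
      intro h
      have := dss 0 (L-m) (by omega) (by omega) h
      omega
    rw [mKo, triple_apply_ne _ _ _ _ _ (fun h => dys 0 (by omega) h.symm) hz
      (fun h => dsu 0 1 (by omega) (by omega) (by omega) h)] at h2
    omega
  have hBtrue0 : N.rB i₀ j0 ≤ mKo N i₀ m := by
    rw [rB, hj0v, mKo]
    intro t
    rw [Finsupp.single_apply]
    split_ifs with h
    · rw [← h, triple_apply_thd _ _ _ _ (fun hh => dyu 1 (by omega) (by omega) hh.symm)
        (fun hh => dsu (L-m) 1 (by omega) (by omega) (by omega) hh.symm)]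
    · exact Nat.zero_le _
  have hsplit0 : mKo N i₀ m
      = (single (N.Y i₀) (m-1) + single (N.S i₀ (L-m)) 1) + N.rB i₀ j0 := by
    rw [mKo, rB, hj0v]
  have herB0 : mKo N i₀ m - N.rB i₀ j0
      = single (N.Y i₀) (m-1) + single (N.S i₀ (L-m)) 1 := by
    rw [hsplit0, add_tsub_cancel_right]
  have hpcY0 : pc φ (mKo N i₀ m) (N.rB i₀ j0) (N.Y i₀) =
      (m : ℝ) * coeff (mAe N i₀ m) φ := by
    unfold pc
    have hmon : (single (N.Y i₀) (m-1) + single (N.S i₀ (L-m)) 1 : σ →₀ ℕ)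
        + single (N.Y i₀) 1 = mAe N i₀ m := by
      rw [mAe,
        show (single (N.Y i₀) m : σ →₀ ℕ) = single (N.Y i₀) (m-1) + single (N.Y i₀) 1 from by
          rw [← Finsupp.single_add]; congr 1; omega]
      abel
    rw [herB0, hmon]
    have hap : (mAe N i₀ m) (N.Y i₀) = m := by
      rw [mAe]; exact pair_apply_fst _ _ _ (dys (L-m) (by omega))
    rw [hap]
  have hpcS0 : pc φ (mKo N i₀ m) (N.rB i₀ j0) (N.S i₀ (j0 : ℕ)) = 0 := by
    unfold pc
    rw [herB0, hj0v]
    rw [vanish N i₀ h1 part hp k (wKOK N i₀ h1 part hp) (2*m) _ ?_, mul_zero]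
    rw [Wt_single, Wt_triple, wK, wtOf_Y N i₀ h1 part hp,
      wtOf_S N i₀ h1 part hp _ _ _ _ L (le_refl _),
      wtOf_S N i₀ h1 part hp _ _ _ _ (L-m) (by omega),
      wtOf_S N i₀ h1 part hp _ _ _ _ 0 (by omega)]
    simp only [ρK]
    split_ifs <;> (push_cast; try omega)
  have hpcS1 : pc φ (mKo N i₀ m) (N.rB i₀ j0) (N.S i₀ ((j0 : ℕ)+1)) = 0 := by
    unfold pc
    rw [herB0, hj0v]
    rw [vanish N i₀ h1 part hp k (wKOK N i₀ h1 part hp) (2*m) _ ?_, mul_zero]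
    rw [Wt_single, Wt_triple, wK, wtOf_Y N i₀ h1 part hp,
      wtOf_S N i₀ h1 part hp _ _ _ _ L (le_refl _),
      wtOf_S N i₀ h1 part hp _ _ _ _ (L-m) (by omega),
      wtOf_S N i₀ h1 part hp _ _ _ _ (0+1) (by omega)]
    simp only [ρK]
    split_ifs <;> (push_cast; try omega)
  have hpcU0 : pc φ (mKo N i₀ m) (N.rB i₀ j0) (N.U i₀ ((j0 : ℕ)+1)) = 0 := by
    unfold pc
    rw [herB0, hj0v]
    rw [vanish N i₀ h1 part hp k (wKOK N i₀ h1 part hp) (2*m) _ ?_, mul_zero]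
    rw [Wt_single, Wt_triple, wK, wtOf_Y N i₀ h1 part hp,
      wtOf_S N i₀ h1 part hp _ _ _ _ L (le_refl _),
      wtOf_S N i₀ h1 part hp _ _ _ _ (L-m) (by omega),
      wtOf_U N i₀ h1 part hp _ _ _ _ (0+1) (by omega) (by omega)]
    simp only [ρK, τK]
    split_ifs <;> (push_cast; try omega)
  rw [if_pos hAtrue, if_neg hBfa, if_neg hAf0, if_pos hBtrue0]
  rw [hpcU, hpcY, hpcS, hpcY0, hpcS0, hpcS1, hpcU0]
  have hpar1 : k ⟨i₀, ja, 0⟩ = par N i₀ k 0 (L - m) := by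
    rw [par, dif_pos (by omega : L - m < L)]
  have hpar2 : k ⟨i₀, j0, 1⟩ = par N i₀ k 1 0 := by
    rw [par, dif_pos (by omega : 0 < L)]
  have hpar3 : k ⟨i₀, j0, 2⟩ = par N i₀ k 2 0 := by
    rw [par, dif_pos (by omega : 0 < L)]
  rw [← hpar1, ← hpar2, ← hpar3]
  ring

/-- The even type-K step. -/
lemma stepK_even (k : N.Param → ℝ) (m : ℕ) (hm1 : 1 ≤ m) (hm : m + 2 ≤ N.L i₀) :
    coeff (mKe N i₀ m) (N.deriv k (2*m+2) (N.S i₀ (N.L i₀))) =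
      par N i₀ k 2 (N.L i₀ - 1 - m) *
          coeff (mKo N i₀ m) (N.deriv k (2*m+1) (N.S i₀ (N.L i₀)))
        + (par N i₀ k 1 0 + par N i₀ k 2 0) * m *
          coeff (mAo N i₀ m) (N.deriv k (2*m+1) (N.S i₀ (N.L i₀))) := by
  have hL := N.Lpos i₀
  set L := N.L i₀ with hLdef
  have dys : ∀ r ≤ L, N.Y i₀ ≠ N.S i₀ r := dYS N i₀ h1 part hp
  have dyu : ∀ r, 1 ≤ r → r ≤ L → N.Y i₀ ≠ N.U i₀ r := dYU N i₀ h1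
  have dsu : ∀ r r', r ≤ L → 1 ≤ r' → r' ≤ L → N.S i₀ r ≠ N.U i₀ r' := dSU N i₀ h1
  have dss : ∀ r r', r ≤ L → r' ≤ L → N.S i₀ r = N.S i₀ r' → r = r' := dSS N i₀ h1
  have duu : ∀ r r', 1 ≤ r → r ≤ L → 1 ≤ r' → r' ≤ L → N.U i₀ r = N.U i₀ r' → r = r' :=
    dUU N i₀ h1
  have φdef : N.deriv k (2*m+2) (N.S i₀ L) = lieD (N.rhs k) (N.deriv k (2*m+1) (N.S i₀ L)) :=
    rfl
  set φ := N.deriv k (2*m+1) (N.S i₀ L) with hφ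
  have hsupp : ∀ t, (mKe N i₀ m) t ≠ 0 → kept N i₀ t := by
    rw [mKe]
    exact supp_triple N i₀ _ _ _ _ (keptY N i₀ h1 part hp)
      (keptU' N i₀ h1 part hp (L - m) (by omega) (by omega))
      (keptU' N i₀ h1 part hp 1 (by omega) (by omega))
  rw [φdef, coeff_lieD_comp N i₀ h1 part hp k φ _ hsupp]
  have hAfalse : ∀ j : Fin L, ¬ (N.rA i₀ j ≤ mKe N i₀ m) := by
    intro j hle
    have h2 := le_rA_S hle
    rw [mKe, triple_apply_ne _ _ _ _ _ (fun h => dys (j:ℕ) (by omega) h.symm)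
      (fun h => dsu (j:ℕ) (L-m) (by omega) (by omega) (by omega) h)
      (fun h => dsu (j:ℕ) 1 (by omega) (by omega) (by omega) h)] at h2
    omega
  rw [sum_pair_eq _ (⟨L - 1 - m, by omega⟩ : Fin L) (⟨0, by omega⟩ : Fin L)
    (by intro h; rw [Fin.mk.injEq] at h; omega) ?hkill]
  case hkill =>
    intro j hjb hj0
    have hBf : ¬ (N.rB i₀ j ≤ mKe N i₀ m) := by
      intro hle
      have h2 := le_rB_U hle
      have hz : N.U i₀ ((j:ℕ)+1) ≠ N.U i₀ (L-m) := by
        intro h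
        have := duu ((j:ℕ)+1) (L-m) (by omega) (by omega) (by omega) (by omega) h
        exact hjb (by apply Fin.ext; simp; omega)
      have hz' : N.U i₀ ((j:ℕ)+1) ≠ N.U i₀ 1 := by
        intro h
        have := duu ((j:ℕ)+1) 1 (by omega) (by omega) (by omega) (by omega) h
        exact hj0 (by apply Fin.ext; simp; omega)
      rw [mKe, triple_apply_ne _ _ _ _ _
        (fun h => dyu ((j:ℕ)+1) (by omega) (by omega) h.symm) hz hz'] at h2
      omega
    rw [if_neg (hAfalse j), if_neg hBf, add_zero]
  set jb : Fin L := ⟨L - 1 - m, by omega⟩ with hjb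
  set j0 : Fin L := ⟨0, by omega⟩ with hj0
  have hjbv : (jb : ℕ) = L - m - 1 := by simp [hjb]; omega
  have hjbU : (jb : ℕ) + 1 = L - m := by rw [hjbv]; omega
  have hj0v : (j0 : ℕ) = 0 := rfl
  have hULm1 : N.U i₀ (L - m) ≠ N.U i₀ 1 := by
    intro h
    have := duu (L-m) 1 (by omega) (by omega) (by omega) (by omega) h
    omega
  -- block jb
  have hBtrue : N.rB i₀ jb ≤ mKe N i₀ m := by
    rw [rB, hjbU, mKe]
    intro t
    rw [Finsupp.single_apply]
    split_ifs with h
    · rw [← h, triple_apply_snd _ _ _ _ (fun hh => dyu (L-m) (by omega) (by omega) hh.symm)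
        hULm1]
    · exact Nat.zero_le _
  have hsplitB : mKe N i₀ m
      = (single (N.Y i₀) (m-1) + single (N.U i₀ 1) 1) + N.rB i₀ jb := by
    rw [mKe, rB, hjbU]; abel
  have herB : mKe N i₀ m - N.rB i₀ jb = single (N.Y i₀) (m-1) + single (N.U i₀ 1) 1 := by
    rw [hsplitB, add_tsub_cancel_right]
  have hpcYb : pc φ (mKe N i₀ m) (N.rB i₀ jb) (N.Y i₀) = 0 := by
    unfold pc
    rw [herB]
    rw [vanish N i₀ h1 part hp k (wKOK N i₀ h1 part hp) (2*m+1) _ ?_, mul_zero]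
    rw [Wt_single, Wt_triple, wK, wtOf_Y N i₀ h1 part hp,
      wtOf_S N i₀ h1 part hp _ _ _ _ L (le_refl _),
      wtOf_U N i₀ h1 part hp _ _ _ _ 1 (by omega) (by omega)]
    simp only [ρK, τK]
    split_ifs <;> (push_cast; try omega)
  have hpcSb : pc φ (mKe N i₀ m) (N.rB i₀ jb) (N.S i₀ (jb : ℕ)) = 0 := by
    unfold pc
    rw [herB, hjbv]
    rw [vanish N i₀ h1 part hp k (wKOK N i₀ h1 part hp) (2*m+1) _ ?_, mul_zero]
    rw [Wt_single, Wt_triple, wK, wtOf_Y N i₀ h1 part hp,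
      wtOf_S N i₀ h1 part hp _ _ _ _ L (le_refl _),
      wtOf_U N i₀ h1 part hp _ _ _ _ 1 (by omega) (by omega),
      wtOf_S N i₀ h1 part hp _ _ _ _ (L-m-1) (by omega)]
    simp only [ρK, τK]
    split_ifs <;> (push_cast; try omega)
  have hpcUb : pc φ (mKe N i₀ m) (N.rB i₀ jb) (N.U i₀ ((jb : ℕ)+1)) = 0 := by
    unfold pc
    rw [herB, hjbU]
    rw [vanish N i₀ h1 part hp k (wKOK N i₀ h1 part hp) (2*m+1) _ ?_, mul_zero]
    rw [Wt_single, Wt_triple, wK, wtOf_Y N i₀ h1 part hp,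
      wtOf_S N i₀ h1 part hp _ _ _ _ L (le_refl _),
      wtOf_U N i₀ h1 part hp _ _ _ _ 1 (by omega) (by omega),
      wtOf_U N i₀ h1 part hp _ _ _ _ (L-m) (by omega) (by omega)]
    simp only [ρK, τK]
    split_ifs <;> (push_cast; try omega)
  have hpcTb : pc φ (mKe N i₀ m) (N.rB i₀ jb) (N.S i₀ ((jb : ℕ)+1)) =
      coeff (mKo N i₀ m) φ := by
    unfold pc
    have hmon : (single (N.Y i₀) (m-1) + single (N.U i₀ 1) 1 : σ →₀ ℕ)
        + single (N.S i₀ (L-m)) 1 = mKo N i₀ m := by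
      rw [mKo]; abel
    rw [herB, hjbU, hmon]
    have hap : (mKo N i₀ m) (N.S i₀ (L-m)) = 1 := by
      rw [mKo]
      exact triple_apply_snd _ _ _ _ (fun h => dys (L-m) (by omega) h.symm)
        (dsu (L-m) 1 (by omega) (by omega) (by omega))
    rw [hap]
    norm_num
  -- block j0
  have hBtrue0 : N.rB i₀ j0 ≤ mKe N i₀ m := by
    rw [rB, hj0v, mKe]
    intro t
    rw [Finsupp.single_apply]
    split_ifs with h
    · rw [← h, triple_apply_thd _ _ _ _ (fun hh => dyu 1 (by omega) (by omega) hh.symm)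
        (fun hh => hULm1 hh.symm)]
    · exact Nat.zero_le _
  have hsplit0 : mKe N i₀ m
      = (single (N.Y i₀) (m-1) + single (N.U i₀ (L-m)) 1) + N.rB i₀ j0 := by
    rw [mKe, rB, hj0v]
  have herB0 : mKe N i₀ m - N.rB i₀ j0
      = single (N.Y i₀) (m-1) + single (N.U i₀ (L-m)) 1 := by
    rw [hsplit0, add_tsub_cancel_right]
  have hpcY0 : pc φ (mKe N i₀ m) (N.rB i₀ j0) (N.Y i₀) =
      (m : ℝ) * coeff (mAo N i₀ m) φ := by
    unfold pc
    have hmon : (single (N.Y i₀) (m-1) + single (N.U i₀ (L-m)) 1 : σ →₀ ℕ)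
        + single (N.Y i₀) 1 = mAo N i₀ m := by
      rw [mAo,
        show (single (N.Y i₀) m : σ →₀ ℕ) = single (N.Y i₀) (m-1) + single (N.Y i₀) 1 from by
          rw [← Finsupp.single_add]; congr 1; omega]
      abel
    rw [herB0, hmon]
    have hap : (mAo N i₀ m) (N.Y i₀) = m := by
      rw [mAo]; exact pair_apply_fst _ _ _ (dyu (L-m) (by omega) (by omega))
    rw [hap]
  have hpcS0 : pc φ (mKe N i₀ m) (N.rB i₀ j0) (N.S i₀ (j0 : ℕ)) = 0 := by
    unfold pc
    rw [herB0, hj0v]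
    rw [vanish N i₀ h1 part hp k (wKOK N i₀ h1 part hp) (2*m+1) _ ?_, mul_zero]
    rw [Wt_single, Wt_triple, wK, wtOf_Y N i₀ h1 part hp,
      wtOf_S N i₀ h1 part hp _ _ _ _ L (le_refl _),
      wtOf_U N i₀ h1 part hp _ _ _ _ (L-m) (by omega) (by omega),
      wtOf_S N i₀ h1 part hp _ _ _ _ 0 (by omega)]
    simp only [ρK, τK]
    split_ifs <;> (push_cast; try omega)
  have hpcS1 : pc φ (mKe N i₀ m) (N.rB i₀ j0) (N.S i₀ ((j0 : ℕ)+1)) = 0 := by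
    unfold pc
    rw [herB0, hj0v]
    rw [vanish N i₀ h1 part hp k (wKOK N i₀ h1 part hp) (2*m+1) _ ?_, mul_zero]
    rw [Wt_single, Wt_triple, wK, wtOf_Y N i₀ h1 part hp,
      wtOf_S N i₀ h1 part hp _ _ _ _ L (le_refl _),
      wtOf_U N i₀ h1 part hp _ _ _ _ (L-m) (by omega) (by omega),
      wtOf_S N i₀ h1 part hp _ _ _ _ (0+1) (by omega)]
    simp only [ρK, τK]
    split_ifs <;> (push_cast; try omega)
  have hpcU0 : pc φ (mKe N i₀ m) (N.rB i₀ j0) (N.U i₀ ((j0 : ℕ)+1)) = 0 := by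
    unfold pc
    rw [herB0, hj0v]
    rw [vanish N i₀ h1 part hp k (wKOK N i₀ h1 part hp) (2*m+1) _ ?_, mul_zero]
    rw [Wt_single, Wt_triple, wK, wtOf_Y N i₀ h1 part hp,
      wtOf_S N i₀ h1 part hp _ _ _ _ L (le_refl _),
      wtOf_U N i₀ h1 part hp _ _ _ _ (L-m) (by omega) (by omega),
      wtOf_U N i₀ h1 part hp _ _ _ _ (0+1) (by omega) (by omega)]
    simp only [ρK, τK]
    split_ifs <;> (push_cast; try omega)
  rw [if_neg (hAfalse jb), if_pos hBtrue, if_neg (hAfalse j0), if_pos hBtrue0]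
  rw [hpcYb, hpcSb, hpcUb, hpcTb, hpcY0, hpcS0, hpcS1, hpcU0]
  have hpar1' : k ⟨i₀, jb, 2⟩ = par N i₀ k 2 (L - 1 - m) := by
    rw [par, dif_pos (by omega : L - 1 - m < L)]
  have hpar2 : k ⟨i₀, j0, 1⟩ = par N i₀ k 1 0 := by
    rw [par, dif_pos (by omega : 0 < L)]
  have hpar3 : k ⟨i₀, j0, 2⟩ = par N i₀ k 2 0 := by
    rw [par, dif_pos (by omega : 0 < L)]
  rw [← hpar1', ← hpar2, ← hpar3]
  ring

/-- The base type-K step (`m = 1`). -/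
lemma stepK_base (k : N.Param → ℝ) (hL2 : 2 ≤ N.L i₀) :
    coeff (mKo N i₀ 1) (N.deriv k 3 (N.S i₀ (N.L i₀))) =
      (par N i₀ k 1 0 + par N i₀ k 2 0) *
        coeff (mAe N i₀ 1) (N.deriv k 2 (N.S i₀ (N.L i₀))) := by
  have hL := N.Lpos i₀
  set L := N.L i₀ with hLdef
  have dys : ∀ r ≤ L, N.Y i₀ ≠ N.S i₀ r := dYS N i₀ h1 part hp
  have dyu : ∀ r, 1 ≤ r → r ≤ L → N.Y i₀ ≠ N.U i₀ r := dYU N i₀ h1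
  have dsu : ∀ r r', r ≤ L → 1 ≤ r' → r' ≤ L → N.S i₀ r ≠ N.U i₀ r' := dSU N i₀ h1
  have dss : ∀ r r', r ≤ L → r' ≤ L → N.S i₀ r = N.S i₀ r' → r = r' := dSS N i₀ h1
  have duu : ∀ r r', 1 ≤ r → r ≤ L → 1 ≤ r' → r' ≤ L → N.U i₀ r = N.U i₀ r' → r = r' :=
    dUU N i₀ h1
  have φdef : N.deriv k 3 (N.S i₀ L) = lieD (N.rhs k) (N.deriv k 2 (N.S i₀ L)) := rfl
  set φ := N.deriv k 2 (N.S i₀ L) with hφ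
  have hsupp : ∀ t, (mKo N i₀ 1) t ≠ 0 → kept N i₀ t := by
    rw [mKo]
    exact supp_triple N i₀ _ _ _ _ (keptY N i₀ h1 part hp)
      (keptS N i₀ h1 part hp (L - 1) (by omega)) (keptU' N i₀ h1 part hp 1 (by omega) (by omega))
  rw [φdef, coeff_lieD_comp N i₀ h1 part hp k φ _ hsupp]
  have hAfalse : ∀ j : Fin L, ¬ (N.rA i₀ j ≤ mKo N i₀ 1) := by
    intro j hle
    have h2 := le_rA_Y hle
    rw [mKo, show (1:ℕ) - 1 = 0 from rfl,
      triple_apply_fst _ _ _ _ (dys (L-1) (by omega)) (dyu 1 (by omega) (by omega))] at h2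
    omega
  rw [Finset.sum_eq_single_of_mem (⟨0, by omega⟩ : Fin L) (Finset.mem_univ _)]
  · set j0 : Fin L := ⟨0, by omega⟩ with hj0
    have hj0v : (j0 : ℕ) = 0 := rfl
    have hBtrue0 : N.rB i₀ j0 ≤ mKo N i₀ 1 := by
      rw [rB, hj0v, mKo]
      intro t
      rw [Finsupp.single_apply]
      split_ifs with h
      · rw [← h, triple_apply_thd _ _ _ _ (fun hh => dyu 1 (by omega) (by omega) hh.symm)
          (fun hh => dsu (L-1) 1 (by omega) (by omega) (by omega) hh.symm)]
      · exact Nat.zero_le _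
    rw [if_neg (hAfalse j0), if_pos hBtrue0]
    have hsplit0 : mKo N i₀ 1
        = (single (N.Y i₀) 0 + single (N.S i₀ (L-1)) 1) + N.rB i₀ j0 := by
      rw [mKo, rB, hj0v]
    have herB0 : mKo N i₀ 1 - N.rB i₀ j0
        = single (N.Y i₀) 0 + single (N.S i₀ (L-1)) 1 := by
      rw [hsplit0, add_tsub_cancel_right]
    have hpcY0 : pc φ (mKo N i₀ 1) (N.rB i₀ j0) (N.Y i₀) =
        coeff (mAe N i₀ 1) φ := by
      unfold pc
      have hmon : (single (N.Y i₀) 0 + single (N.S i₀ (L-1)) 1 : σ →₀ ℕ)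
          + single (N.Y i₀) 1 = mAe N i₀ 1 := by
        rw [mAe, Finsupp.single_zero, zero_add]
        abel
      rw [herB0, hmon]
      have hap : (mAe N i₀ 1) (N.Y i₀) = 1 := by
        rw [mAe]; exact pair_apply_fst _ _ _ (dys (L-1) (by omega))
      rw [hap]
      norm_num
    have hpcS0 : pc φ (mKo N i₀ 1) (N.rB i₀ j0) (N.S i₀ (j0 : ℕ)) = 0 := by
      unfold pc
      rw [herB0, hj0v]
      rw [vanish N i₀ h1 part hp k (wKOK N i₀ h1 part hp) 2 _ ?_, mul_zero]
      rw [Wt_single, Wt_triple, wK, wtOf_Y N i₀ h1 part hp,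
        wtOf_S N i₀ h1 part hp _ _ _ _ L (le_refl _),
        wtOf_S N i₀ h1 part hp _ _ _ _ (L-1) (by omega),
        wtOf_S N i₀ h1 part hp _ _ _ _ 0 (by omega)]
      simp only [ρK]
      split_ifs <;> (push_cast; try omega)
    have hpcS1 : pc φ (mKo N i₀ 1) (N.rB i₀ j0) (N.S i₀ ((j0 : ℕ)+1)) = 0 := by
      unfold pc
      rw [herB0, hj0v]
      rw [vanish N i₀ h1 part hp k (wKOK N i₀ h1 part hp) 2 _ ?_, mul_zero]
      rw [Wt_single, Wt_triple, wK, wtOf_Y N i₀ h1 part hp,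
        wtOf_S N i₀ h1 part hp _ _ _ _ L (le_refl _),
        wtOf_S N i₀ h1 part hp _ _ _ _ (L-1) (by omega),
        wtOf_S N i₀ h1 part hp _ _ _ _ (0+1) (by omega)]
      simp only [ρK]
      split_ifs <;> (push_cast; try omega)
    have hpcU0 : pc φ (mKo N i₀ 1) (N.rB i₀ j0) (N.U i₀ ((j0 : ℕ)+1)) = 0 := by
      unfold pc
      rw [herB0, hj0v]
      rw [vanish N i₀ h1 part hp k (wKOK N i₀ h1 part hp) 2 _ ?_, mul_zero]
      rw [Wt_single, Wt_triple, wK, wtOf_Y N i₀ h1 part hp,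
        wtOf_S N i₀ h1 part hp _ _ _ _ L (le_refl _),
        wtOf_S N i₀ h1 part hp _ _ _ _ (L-1) (by omega),
        wtOf_U N i₀ h1 part hp _ _ _ _ (0+1) (by omega) (by omega)]
      simp only [ρK, τK]
      split_ifs <;> (push_cast; try omega)
    rw [hpcY0, hpcS0, hpcS1, hpcU0]
    have hpar2 : k ⟨i₀, j0, 1⟩ = par N i₀ k 1 0 := by
      rw [par, dif_pos (by omega : 0 < L)]
    have hpar3 : k ⟨i₀, j0, 2⟩ = par N i₀ k 2 0 := by
      rw [par, dif_pos (by omega : 0 < L)]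
    rw [← hpar2, ← hpar3]
    ring
  · intro j _ hne
    have hBf : ¬ (N.rB i₀ j ≤ mKo N i₀ 1) := by
      intro hle
      have h2 := le_rB_U hle
      have hz' : N.U i₀ ((j:ℕ)+1) ≠ N.U i₀ 1 := by
        intro h
        have := duu ((j:ℕ)+1) 1 (by omega) (by omega) (by omega) (by omega) h
        exact hne (by apply Fin.ext; simp; omega)
      rw [mKo, triple_apply_ne _ _ _ _ _
        (fun h => dyu ((j:ℕ)+1) (by omega) (by omega) h.symm)
        (fun h => dsu (L-1) ((j:ℕ)+1) (by omega) (by omega) (by omega) h.symm) hz'] at h2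
      omega
    rw [if_neg (hAfalse j), if_neg hBf, add_zero]

/-- The type-K tracked values. -/
lemma typeK_vals (k : N.Param → ℝ) : ∀ m, 1 ≤ m → m + 1 ≤ N.L i₀ →
    coeff (mKo N i₀ m) (N.deriv k (2*m+1) (N.S i₀ (N.L i₀))) =
      (m:ℝ)^2 * (par N i₀ k 1 0 + par N i₀ k 2 0) * Pch N i₀ k m ∧
    (m + 2 ≤ N.L i₀ → coeff (mKe N i₀ m) (N.deriv k (2*m+2) (N.S i₀ (N.L i₀))) =
      (m:ℝ) * ((m:ℝ)+1) * (par N i₀ k 1 0 + par N i₀ k 2 0) * Pch N i₀ k m *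
        par N i₀ k 2 (N.L i₀ - 1 - m)) := by
  intro m
  induction m with
  | zero => intro h; omega
  | succ m ih =>
    intro _ hm
    rcases Nat.eq_or_lt_of_le (show 1 ≤ m + 1 from by omega) with hone | hone
    · have hm0 : m = 0 := by omega
      subst hm0
      have hbo : coeff (mKo N i₀ 1) (N.deriv k (2*1+1) (N.S i₀ (N.L i₀))) =
          (1:ℝ)^2 * (par N i₀ k 1 0 + par N i₀ k 2 0) * Pch N i₀ k 1 := by
        have hc := (chain_vals N i₀ h1 part hp k 1 (by omega)).1
        rw [show (2*1 : ℕ) = 2 by norm_num] at hc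
        rw [show 2*1+1 = 3 from rfl, stepK_base N i₀ h1 part hp k (by omega), hc]
        ring
      constructor
      · exact_mod_cast hbo
      · intro hm2
        rw [stepK_even N i₀ h1 part hp k 1 (by omega) (by omega), hbo,
          (chain_vals N i₀ h1 part hp k 1 (by omega)).2 (by omega)]
        push_cast
        ring
    · have hm1 : 1 ≤ m := by omega
      have hprev := ih hm1 (by omega)
      have hbe := hprev.2 (by omega)
      have hbo : coeff (mKo N i₀ (m+1)) (N.deriv k (2*(m+1)+1) (N.S i₀ (N.L i₀))) =
          ((m:ℝ)+1)^2 * (par N i₀ k 1 0 + par N i₀ k 2 0) * Pch N i₀ k (m+1) := by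
        rw [stepK_odd N i₀ h1 part hp k (m+1) (by omega) (by omega),
          show (m+1) - 1 = m from by omega,
          (chain_vals N i₀ h1 part hp k (m+1) (by omega)).1,
          show 2*(m+1) = 2*m+2 from by ring, hbe]
        rw [show Pch N i₀ k (m+1) = Pch N i₀ k m *
            (par N i₀ k 2 (N.L i₀ - 1 - m) * par N i₀ k 0 (N.L i₀ - 1 - m)) from rfl]
        rw [show N.L i₀ - (m+1) = N.L i₀ - 1 - m from by omega]
        push_cast
        ring
      constructor
      · rw [hbo]; push_cast; ring
      · intro hm2
        rw [stepK_even N i₀ h1 part hp k (m+1) (by omega) (by omega), hbo,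
          (chain_vals N i₀ h1 part hp k (m+1) (by omega)).2 (by omega)]
        push_cast
        ring

lemma typeK_final (k : N.Param → ℝ) (hL2 : 2 ≤ N.L i₀) :
    coeff (mKo N i₀ (N.L i₀ - 1)) (N.deriv k (2*(N.L i₀)-1) (N.S i₀ (N.L i₀))) =
      (((N.L i₀ - 1 : ℕ) : ℝ)^2) * (par N i₀ k 1 0 + par N i₀ k 2 0) *
        Pch N i₀ k (N.L i₀ - 1) := by
  have hL := N.Lpos i₀
  have h := (typeK_vals N i₀ h1 part hp k (N.L i₀ - 1) (by omega) (by omega)).1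
  rw [show 2*(N.L i₀ - 1)+1 = 2*(N.L i₀)-1 from by omega] at h
  rw [h]

end TypeAK

section Positivity

variable (N : A1Network σ) (i₀ : N.ι)

lemma par_pos (k : N.Param → ℝ) (hk : ∀ r, 0 < k r) (t : Fin 3) (n : ℕ) :
    0 < par N i₀ k t n := by
  rw [par]
  split_ifs with h
  · exact hk _
  · norm_num

lemma Pch_pos (k : N.Param → ℝ) (hk : ∀ r, 0 < k r) (m : ℕ) : 0 < Pch N i₀ k m := by
  induction m with
  | zero => rw [Pch]; norm_num
  | succ m ih =>
    rw [Pch]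
    have := par_pos N i₀ k hk 2 (N.L i₀ - 1 - m)
    have := par_pos N i₀ k hk 0 (N.L i₀ - 1 - m)
    positivity

end Positivity

/-- **Proposition (one connected component).** All the rate constants of a fixed connected
component `i₀` can be identified from the derivatives `s_L^{(ℓ)}`, `1 ≤ ℓ ≤ max 2 (2L-1)`,
of the last product `S i₀ (L i₀)` of the component. -/
theorem component_identifiable_from_last_product
    (N : A1Network σ) (h1 : N.Assumption1) (h2 : N.Assumption2) (i₀ : N.ι) :
    N.IdentifiableFrom (fun k => fun p : Fin (N.L i₀) × Fin 3 => k ⟨i₀, p.1, p.2⟩)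
      {N.S i₀ (N.L i₀)} (max 2 (2 * N.L i₀ - 1)) := by
  obtain ⟨part, hp⟩ := h2
  intro k₁ k₂ hk₁ hk₂ hmatch
  have hL := N.Lpos i₀
  set L := N.L i₀ with hLdef
  set D := max 2 (2 * L - 1) with hD
  have hm : ∀ ℓ, 1 ≤ ℓ → ℓ ≤ D → ∀ e : σ →₀ ℕ,
      coeff e (N.deriv k₁ ℓ (N.S i₀ L)) = coeff e (N.deriv k₂ ℓ (N.S i₀ L)) := by
    intro ℓ h1ℓ hℓD e
    rw [hmatch (N.S i₀ L) rfl ℓ h1ℓ hℓD]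
  -- the central claim, proved by downward induction on the block index
  have key : ∀ d : ℕ, ∀ n, n < L → L - n ≤ d → ∀ t : Fin 3, par N i₀ k₁ t n = par N i₀ k₂ t n := by
    intro d
    induction d with
    | zero => intro n hn hd; omega
    | succ d ih =>
      intro n hn hd t
      by_cases hdone : L - n ≤ d
      · exact ih n hn hdone t
      -- now prove it for block n, assuming all higher blocks match
      have IH : ∀ q, q < L → n < q → ∀ t : Fin 3, par N i₀ k₁ t q = par N i₀ k₂ t q :=
        fun q hq hnq t => ih q hq (by omega) t
      have hP : ∀ q, q ≤ L - 1 - n → Pch N i₀ k₁ q = Pch N i₀ k₂ q := by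
        intro q hq
        induction q with
        | zero => rw [Pch, Pch]
        | succ q ihq =>
          rw [Pch, Pch, ihq (by omega), IH (L - 1 - q) (by omega) (by omega),
            IH (L - 1 - q) (by omega) (by omega)]
      set m : ℕ := L - 1 - n with hmdef
      have hnm : L - 1 - m = n := by omega
      have hPm := hP m (le_refl _)
      have hPm_pos := Pch_pos N i₀ k₂ hk₂ m
      -- identification of c_n
      have hc : par N i₀ k₁ 2 n = par N i₀ k₂ 2 n := by
        have hv1 := (chain_vals N i₀ h1 part hp k₁ m (by omega)).2 (by omega)
        have hv2 := (chain_vals N i₀ h1 part hp k₂ m (by omega)).2 (by omega)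
        rw [hm (2*m+1) (by omega) (by rw [hD]; omega) (mAo N i₀ m)] at hv1
        rw [hv2, hnm] at hv1
        rw [hPm] at hv1
        exact (mul_left_cancel₀ (ne_of_gt hPm_pos) hv1).symm
      -- identification of a_n and b_n
      have hab : par N i₀ k₁ 0 n = par N i₀ k₂ 0 n ∧ par N i₀ k₁ 1 n = par N i₀ k₂ 1 n := by
        by_cases hcase : 1 ≤ n ∨ L = 1
        · -- via the even chain value and the stay step, both at time 2(L-n) ≤ D
          have htime : 2*m + 2 ≤ D := by rw [hD]; omega
          constructor
          · -- a_n from Pch (m+1)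
            have hv1 := (chain_vals N i₀ h1 part hp k₁ (m+1) (by omega)).1
            have hv2 := (chain_vals N i₀ h1 part hp k₂ (m+1) (by omega)).1
            rw [show 2*(m+1) = 2*m+2 from by ring] at hv1 hv2
            rw [hm (2*m+2) (by omega) htime (mAe N i₀ (m+1))] at hv1
            rw [hv2] at hv1
            rw [Pch, Pch, hPm, hnm, hc] at hv1
            have h2pos := par_pos N i₀ k₂ hk₂ 2 n
            have hstep := mul_left_cancel₀ (ne_of_gt hPm_pos) hv1
            exact (mul_left_cancel₀ (ne_of_gt h2pos) hstep).symm
          · -- b_n from the stay step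
            have hv1 := chain_step_B N i₀ h1 part hp k₁ m (by omega)
            have hv2 := chain_step_B N i₀ h1 part hp k₂ m (by omega)
            rw [hm (2*m+2) (by omega) htime (mAo N i₀ m)] at hv1
            rw [hv2] at hv1
            have ho1 := (chain_vals N i₀ h1 part hp k₁ m (by omega)).2 (by omega)
            have ho2 := (chain_vals N i₀ h1 part hp k₂ m (by omega)).2 (by omega)
            have hG : coeff (mAe N i₀ m) (N.deriv k₁ (2*m+1) (N.S i₀ L)) =
                coeff (mAe N i₀ m) (N.deriv k₂ (2*m+1) (N.S i₀ L)) :=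
              hm (2*m+1) (by omega) (by rw [hD]; omega) _
            rw [ho1, ho2, hG, hnm, hc, hPm] at hv1
            have h2pos := par_pos N i₀ k₂ hk₂ 2 n
            -- hv1 : -(b₁ + c) * (P * c) + c * G = -(b₂ + c) * (P * c) + c * G
            have : par N i₀ k₁ 1 n * (Pch N i₀ k₂ m * par N i₀ k₂ 2 n) =
                par N i₀ k₂ 1 n * (Pch N i₀ k₂ m * par N i₀ k₂ 2 n) := by nlinarith [hv1]
            exact mul_right_cancel₀ (by positivity) this
        · -- n = 0 and L ≥ 2 : use the type-a and type-K monomials at time 2L-1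
          have hn0 : n = 0 := by omega
          have hL2 : 2 ≤ L := by omega
          have hmL : m = L - 1 := by omega
          have htime : 2*L - 1 ≤ D := by rw [hD]; omega
          have hsq : (0:ℝ) < (((L - 1 : ℕ) : ℝ))^2 := by
            have : (1:ℝ) ≤ ((L - 1 : ℕ) : ℝ) := by
              have : 1 ≤ L - 1 := by omega
              exact_mod_cast this
            positivity
          have hPL := hP (L-1) (by omega)
          have hPLpos := Pch_pos N i₀ k₂ hk₂ (L-1)
          constructor
          · have hv1 := typeA_final N i₀ h1 part hp k₁ hL2
            have hv2 := typeA_final N i₀ h1 part hp k₂ hL2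
            rw [hm (2*L-1) (by omega) htime (mBo N i₀ (L-1))] at hv1
            rw [hv2, hPL] at hv1
            rw [hn0]
            have := mul_right_cancel₀ (ne_of_gt hPLpos) hv1
            nlinarith [this, hsq]
          · have hv1 := typeK_final N i₀ h1 part hp k₁ hL2
            have hv2 := typeK_final N i₀ h1 part hp k₂ hL2
            rw [hm (2*L-1) (by omega) htime (mKo N i₀ (L-1))] at hv1
            rw [hv2, hPL] at hv1
            have hKeq := mul_right_cancel₀ (ne_of_gt hPLpos) hv1
            have hsum : par N i₀ k₁ 1 n + par N i₀ k₁ 2 n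
                = par N i₀ k₂ 1 n + par N i₀ k₂ 2 n := by
              rw [hn0]
              nlinarith [hKeq, hsq]
            have := hc
            linarith
      fin_cases t
      · exact hab.1
      · exact hab.2
      · exact hc
  funext p
  obtain ⟨jf, tf⟩ := p
  have hjf : (jf : ℕ) < L := jf.2
  have h := key L (jf : ℕ) hjf (by omega) tf
  rw [par, par, dif_pos hjf, dif_pos hjf] at h
  simpa using h

end A1Network
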